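/- Let (R,Δ) be an odd form ring, n ∈ ℕ, and let I be an involution invariant ideal of R. Denote by ROFP(I) the set of all relative odd form parameters for I. Then the map (σ,Ω) ↦ ^σΩ is a left group action of U_{2n+1}(R,Δ) on ROFP(I): for every Ω ∈ ROFP(I), ^σΩ ∈ ROFP(I), ^eΩ = Ω, and ^{στ}Ω = ^σ(^τΩ) for all σ,τ ∈ U_{2n+1}(R,Δ). -/

import Mathlib

open scoped BigOperators

noncomputable section

/-- The index set `Θ = {-n, …, n}` for the odd-dimensional unitary group. -/
abbrev Idx (n : ℕ) : Type := {i : ℤ // i ∈ Finset.Icc (-(n : ℤ)) (n : ℤ)}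

namespace Idx

/-- Negation of an index. -/
def neg {n : ℕ} (i : Idx n) : Idx n :=
  ⟨-i.1, by have h := i.2; rw [Finset.mem_Icc] at h ⊢; omega⟩

/-- The index `0`. -/
def zero (n : ℕ) : Idx n := ⟨0, by rw [Finset.mem_Icc]; omega⟩

/-- Construct an index from an integer. -/
def of (n : ℕ) (i : ℤ) (h1 : -(n : ℤ) ≤ i) (h2 : i ≤ (n : ℤ)) : Idx n :=
  ⟨i, Finset.mem_Icc.mpr ⟨h1, h2⟩⟩

end Idx

/-- The positive indices `{1, …, n}`. -/
def posIdx (n : ℕ) : Finset (Idx n) := Finset.univ.filter (fun i => 0 < i.1)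

/-- The position of an index in the ordering `1, …, n, 0, -n, …, -1`. -/
def ordIdx {n : ℕ} (i : Idx n) : ℤ :=
  if 0 < i.1 then i.1 else if i.1 = 0 then (n : ℤ) + 1 else 2 * (n : ℤ) + 2 + i.1

/-- The group `GL_{2n+1}(R)` of invertible `(2n+1) × (2n+1)` matrices. -/
abbrev GLn (R : Type*) [Ring R] (n : ℕ) : Type _ := (Matrix (Idx n) (Idx n) R)ˣ

/-- `J(Ω) = {y | ∃ z, (y, z) ∈ Ω}`. -/
def JSet {R : Type*} (Ω : Set (R × R)) : Set R := {y | ∃ z, (y, z) ∈ Ω}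

/-- `M(R, Δ) = {u | u_0 ∈ J(Δ)}`. -/
def MRD {R : Type*} (Δ : Set (R × R)) (n : ℕ) : Set (Idx n → R) :=
  {u | u (Idx.zero n) ∈ JSet Δ}

/-- `M(I, Ω) = {u | u_i ∈ I for i ∈ Θ_hb, u_0 ∈ J(Ω)}`. -/
def MIO {R : Type*} (I : Set R) (Ω : Set (R × R)) (n : ℕ) : Set (Idx n → R) :=
  {u | (∀ i : Idx n, i.1 ≠ 0 → u i ∈ I) ∧ u (Idx.zero n) ∈ JSet Ω}

/-- The data of an odd quadruple `(R, ⁻, λ, μ)`: a ring with an anti-isomorphism `bar`,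
a symmetry `lam` and an element `mu` with `mu = bar mu * lam`. -/
structure OddFormRingData (R : Type*) [Ring R] where
  bar : R → R
  lam : R
  mu : R
  bar_bijective : Function.Bijective bar
  bar_add : ∀ x y : R, bar (x + y) = bar x + bar y
  bar_mul : ∀ x y : R, bar (x * y) = bar y * bar x
  bar_one : bar 1 = 1
  bar_bar : ∀ x : R, bar (bar x) = lam * x * bar lam
  mu_symm : mu = bar mu * lam

namespace OddFormRingData

variable {R : Type*} [Ring R] (D : OddFormRingData R)

/-- Heisenberg addition `∔` on `R × R`. -/
def hAdd (a b : R × R) : R × R := (a.1 + b.1, a.2 + b.2 - D.bar a.1 * D.mu * b.1)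

/-- Heisenberg negation. -/
def hNeg (a : R × R) : R × R := (-a.1, -a.2 - D.bar a.1 * D.mu * a.1)

/-- Heisenberg subtraction `∸`. -/
def hSub (a b : R × R) : R × R := D.hAdd a (D.hNeg b)

/-- The scalar operation `(x, y) • a = (x a, ā y a)`. -/
def hSMul (a : R × R) (r : R) : R × R := (a.1 * r, D.bar r * a.2 * r)

/-- `Δ_min = {(0, x - x̄ λ) | x ∈ R}`. -/
def DeltaMin : Set (R × R) := {p | ∃ x : R, p = (0, x - D.bar x * D.lam)}

/-- `Δ_max = {(x, y) | x̄ μ x + y + ȳ λ = 0}`. -/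
def DeltaMax : Set (R × R) := {p | D.bar p.1 * D.mu * p.1 + p.2 + D.bar p.2 * D.lam = 0}

/-- `Δ` is an odd form parameter. -/
structure IsFormParam (Δ : Set (R × R)) : Prop where
  add_mem : ∀ a ∈ Δ, ∀ b ∈ Δ, D.hAdd a b ∈ Δ
  neg_mem : ∀ a ∈ Δ, D.hNeg a ∈ Δ
  smul_mem : ∀ a ∈ Δ, ∀ r : R, D.hSMul a r ∈ Δ
  min_le : D.DeltaMin ⊆ Δ
  le_max : Δ ⊆ D.DeltaMax

/-- `I` is an involution invariant (two-sided) ideal of `R`. -/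
structure IsInvIdeal (I : Set R) : Prop where
  zero_mem : (0 : R) ∈ I
  add_mem : ∀ x ∈ I, ∀ y ∈ I, x + y ∈ I
  neg_mem : ∀ x ∈ I, -x ∈ I
  mul_left : ∀ r : R, ∀ x ∈ I, r * x ∈ I
  mul_right : ∀ r : R, ∀ x ∈ I, x * r ∈ I
  bar_mem : ∀ x ∈ I, D.bar x ∈ I

/-- `Ĩ = {x | ȳ μ x ∈ I for all y ∈ J(Δ)}`. -/
def tildeI (Δ : Set (R × R)) (I : Set R) : Set R :=
  {x | ∀ y ∈ JSet Δ, D.bar y * D.mu * x ∈ I}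

/-- `Ω^I_min`, the `∔`-subgroup of `R × R` generated by `{(0, x - x̄λ) | x ∈ I}` and
`{a • c | a ∈ Δ, c ∈ I}`. -/
inductive OmegaMin (Δ : Set (R × R)) (I : Set R) : R × R → Prop
  | base (x : R) (hx : x ∈ I) : OmegaMin Δ I (0, x - D.bar x * D.lam)
  | smul (a : R × R) (ha : a ∈ Δ) (c : R) (hc : c ∈ I) : OmegaMin Δ I (D.hSMul a c)
  | add (a b : R × R) : OmegaMin Δ I a → OmegaMin Δ I b → OmegaMin Δ I (D.hAdd a b)
  | neg (a : R × R) : OmegaMin Δ I a → OmegaMin Δ I (D.hNeg a)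

/-- `Ω^I_min` as a set. -/
def OmegaMinSet (Δ : Set (R × R)) (I : Set R) : Set (R × R) := {p | D.OmegaMin Δ I p}

/-- `Ω^I_max = Δ ∩ (Ĩ × I)`. -/
def OmegaMaxSet (Δ : Set (R × R)) (I : Set R) : Set (R × R) :=
  {p | p ∈ Δ ∧ p.1 ∈ D.tildeI Δ I ∧ p.2 ∈ I}

/-- `Ω` is a relative odd form parameter for `I`. -/
structure IsRelFormParam (Δ : Set (R × R)) (I : Set R) (Ω : Set (R × R)) : Prop where
  add_mem : ∀ a ∈ Ω, ∀ b ∈ Ω, D.hAdd a b ∈ Ω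
  neg_mem : ∀ a ∈ Ω, D.hNeg a ∈ Ω
  smul_mem : ∀ a ∈ Ω, ∀ r : R, D.hSMul a r ∈ Ω
  min_le : D.OmegaMinSet Δ I ⊆ Ω
  le_max : Ω ⊆ D.OmegaMaxSet Δ I

/-- `(I, Ω)` is an odd form ideal of `(R, Δ)`. -/
def IsFormIdeal (Δ : Set (R × R)) (I : Set R) (Ω : Set (R × R)) : Prop :=
  D.IsInvIdeal I ∧ D.IsRelFormParam Δ I Ω

/-- `Ω^{-1} = {(x, y) | (x, ȳ) ∈ Ω}`. -/
def paramInv (Ω : Set (R × R)) : Set (R × R) := {p | (p.1, D.bar p.2) ∈ Ω}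

/-- `Ω^{-ε(i)}`. -/
def paramPow {n : ℕ} (Ω : Set (R × R)) (i : Idx n) : Set (R × R) :=
  if 0 < i.1 then D.paramInv Ω else Ω

/-- The λ-Hermitian form `b`. -/
def bform {n : ℕ} (u v : Idx n → R) : R :=
  (∑ i ∈ posIdx n, D.bar (u i) * v i.neg) + D.bar (u (Idx.zero n)) * D.mu * v (Idx.zero n)
    + ∑ i ∈ posIdx n, D.bar (u i.neg) * D.lam * v i

/-- The quadratic map `q`. -/
def qform {n : ℕ} (u : Idx n → R) : R × R :=
  (u (Idx.zero n), ∑ i ∈ posIdx n, D.bar (u i) * u i.neg)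

/-- The odd-dimensional unitary group `U_{2n+1}(R, Δ)`, as a subset of `GL_{2n+1}(R)`. -/
def unitary (Δ : Set (R × R)) (n : ℕ) : Set (GLn R n) :=
  {σ | (∀ u v : Idx n → R,
          D.bform (Matrix.mulVec σ.val u)
            (Matrix.mulVec σ.val v) = D.bform u v)
      ∧ ∀ u : Idx n → R,
          D.hSub (D.qform (Matrix.mulVec σ.val u)) (D.qform u) ∈ Δ}

/-- The short root matrix `T_{ij}(x)`. -/
def shortRootMat {n : ℕ} (i j : Idx n) (x : R) : Matrix (Idx n) (Idx n) R :=
  1 + Matrix.single i j x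
    - Matrix.single j.neg i.neg
        ((if 0 < j.1 then (1 : R) else D.bar D.lam) * D.bar x *
          (if 0 < i.1 then (1 : R) else D.lam))

/-- The extra short root matrix `T_i(x, y)`. -/
def extraShortRootMat {n : ℕ} (i : Idx n) (x y : R) : Matrix (Idx n) (Idx n) R :=
  1 + Matrix.single (Idx.zero n) i.neg x
    - Matrix.single i (Idx.zero n)
        ((if 0 < i.1 then D.bar D.lam else (1 : R)) * D.bar x * D.mu)
    + Matrix.single i i.neg y

/-- `g` is a short root matrix `T_{ij}(x)`. -/
def IsShortRootElem {n : ℕ} (g : GLn R n) : Prop :=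
  ∃ (i j : Idx n) (x : R), i.1 ≠ 0 ∧ j.1 ≠ 0 ∧ i.1 ≠ j.1 ∧ i.1 ≠ -j.1 ∧
    g.val = D.shortRootMat i j x

/-- `g` is an extra short root matrix `T_i(x, y)` with `(x, y) ∈ Δ^{-ε(i)}`. -/
def IsExtraShortRootElem {n : ℕ} (Δ : Set (R × R)) (g : GLn R n) : Prop :=
  ∃ (i : Idx n) (x y : R), i.1 ≠ 0 ∧ (x, y) ∈ D.paramPow Δ i ∧
    g.val = D.extraShortRootMat i x y

/-- The elementary subgroup `EU_{2n+1}(R, Δ)`. -/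
def elemGroup (Δ : Set (R × R)) (n : ℕ) : Subgroup (GLn R n) :=
  Subgroup.closure {g | D.IsShortRootElem g ∨ D.IsExtraShortRootElem Δ g}

/-- `g` is an `(I, Ω)`-elementary short root matrix. -/
def IsRelShortRootElem {n : ℕ} (I : Set R) (g : GLn R n) : Prop :=
  ∃ (i j : Idx n) (x : R), i.1 ≠ 0 ∧ j.1 ≠ 0 ∧ i.1 ≠ j.1 ∧ i.1 ≠ -j.1 ∧ x ∈ I ∧
    g.val = D.shortRootMat i j x

/-- `g` is an `(I, Ω)`-elementary extra short root matrix. -/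
def IsRelExtraShortRootElem {n : ℕ} (Ω : Set (R × R)) (g : GLn R n) : Prop :=
  ∃ (i : Idx n) (x y : R), i.1 ≠ 0 ∧ (x, y) ∈ D.paramPow Ω i ∧
    g.val = D.extraShortRootMat i x y

/-- The preelementary subgroup `EU_{2n+1}(I, Ω)`. -/
def preElemGroup (I : Set R) (Ω : Set (R × R)) (n : ℕ) : Subgroup (GLn R n) :=
  Subgroup.closure {g | D.IsRelShortRootElem I g ∨ D.IsRelExtraShortRootElem Ω g}

/-- The relative elementary subgroup `EU_{2n+1}((R, Δ), (I, Ω))`,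
the normal closure of `EU_{2n+1}(I, Ω)` in `EU_{2n+1}(R, Δ)`. -/
def elemRelGroup (Δ : Set (R × R)) (I : Set R) (Ω : Set (R × R)) (n : ℕ) : Subgroup (GLn R n) :=
  Subgroup.closure {x | ∃ e ∈ D.elemGroup Δ n, ∃ g ∈ D.preElemGroup I Ω n, x = e * g * e⁻¹}

/-- The principal congruence subgroup `U_{2n+1}((R, Δ), (I, Ω))`. -/
def principalCongruence (Δ : Set (R × R)) (I : Set R) (Ω : Set (R × R)) (n : ℕ) :
    Set (GLn R n) :=
  {σ | σ ∈ D.unitary Δ n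
      ∧ (∀ i j : Idx n, i.1 ≠ 0 → j.1 ≠ 0 →
          σ.val i j - (if i = j then (1 : R) else 0) ∈ I)
      ∧ ∀ u ∈ MRD Δ n,
          D.hSub (D.qform (Matrix.mulVec σ.val u)) (D.qform u) ∈ Ω}

/-- The group `Ũ_{2n+1}((R, Δ), (I, Ω))`. -/
def tildeU (Δ : Set (R × R)) (I : Set R) (Ω : Set (R × R)) (n : ℕ) : Set (GLn R n) :=
  {σ | σ ∈ D.unitary Δ n ∧ ∀ u ∈ MIO I Ω n,
      D.hSub (D.qform (Matrix.mulVec σ.val u)) (D.qform u) ∈ Ω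
      ∧ D.hSub (D.qform (Matrix.mulVec ((σ⁻¹).val) u)) (D.qform u) ∈ Ω}

/-- The full congruence subgroup `CU_{2n+1}((R, Δ), (I, Ω))`. -/
def fullCongruence (Δ : Set (R × R)) (I : Set R) (Ω : Set (R × R)) (n : ℕ) : Set (GLn R n) :=
  {σ | σ ∈ D.tildeU Δ I Ω n ∧ ∀ τ ∈ D.elemGroup Δ n,
      σ * τ * σ⁻¹ * τ⁻¹ ∈ D.principalCongruence Δ I Ω n}

/-- `H` is a subgroup of `U_{2n+1}(R, Δ)`. -/
structure IsSubgroupOfUnitary (Δ : Set (R × R)) (n : ℕ) (H : Set (GLn R n)) : Prop where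
  subset : H ⊆ D.unitary Δ n
  one_mem : (1 : GLn R n) ∈ H
  mul_mem : ∀ a ∈ H, ∀ b ∈ H, a * b ∈ H
  inv_mem : ∀ a ∈ H, a⁻¹ ∈ H

/-- `H` is normalized by the elementary subgroup `EU_{2n+1}(R, Δ)`. -/
def IsENormal (Δ : Set (R × R)) (n : ℕ) (H : Set (GLn R n)) : Prop :=
  ∀ e ∈ D.elemGroup Δ n, ∀ h ∈ H, e * h * e⁻¹ ∈ H

/-- The ideal part of the level of `H`. -/
def levelI {n : ℕ} (H : Set (GLn R n)) : Set R :=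
  {x | ∃ i j : Idx n, i.1 ≠ 0 ∧ j.1 ≠ 0 ∧ i.1 ≠ j.1 ∧ i.1 ≠ -j.1 ∧
      ∃ g ∈ H, g.val = D.shortRootMat i j x}

/-- The form parameter part of the level of `H`. -/
def levelOmega {n : ℕ} (Δ : Set (R × R)) (H : Set (GLn R n)) : Set (R × R) :=
  {p | p ∈ Δ ∧ ∃ i : Idx n, i.1 < 0 ∧
      ∃ g ∈ H, g.val = D.extraShortRootMat i p.1 p.2}

/-- The relative odd form parameter `^σΩ` for `I` defined by `Ω` and `σ`. -/
def transportedParam (Δ : Set (R × R)) (I : Set R) (Ω : Set (R × R)) (n : ℕ) (σ : GLn R n) :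
    Set (R × R) :=
  {p | ∃ x y : R, (x, y) ∈ Ω ∧ ∃ m ∈ D.OmegaMinSet Δ I,
      p = D.hAdd (D.hAdd
            (D.hSMul
              (D.hSub (D.qform (fun i => σ.val i (Idx.zero n)))
                ((1 : R), (0 : R))) x)
            (x, y)) m}

/-- `TEU_{2n+1}(R, Δ)`: upper triangular elementary matrices with ones on the diagonal,
with respect to the index ordering `1, …, n, 0, -n, …, -1`. -/
def upperTriangularElem (Δ : Set (R × R)) (n : ℕ) : Set (GLn R n) :=
  {f | f ∈ D.elemGroup Δ n
      ∧ (∀ i j : Idx n, ordIdx j < ordIdx i → f.val i j = 0)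
      ∧ ∀ i : Idx n, f.val i i = 1}

/-- `UEU_{2n+1}(R, Δ)`: elementary matrices of block form `(A B C; 0 1 D; 0 0 E)`
with respect to the decomposition `Θ₊, {0}, Θ₋`. -/
def blockUpperElem (Δ : Set (R × R)) (n : ℕ) : Set (GLn R n) :=
  {f | f ∈ D.elemGroup Δ n
      ∧ (∀ i j : Idx n, i.1 ≤ 0 → 0 < j.1 → f.val i j = 0)
      ∧ f.val (Idx.zero n) (Idx.zero n) = 1
      ∧ ∀ i : Idx n, i.1 < 0 → f.val i (Idx.zero n) = 0}

/-- `R` is quasifinite: it is the union of a directed family of subrings, each closed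
under the involution, containing `λ` and `μ`, and finitely generated as a module over its
center. -/
def IsQuasifinite : Prop :=
  ∃ S : Set (Subring R), S.Nonempty ∧ DirectedOn (· ≤ ·) S ∧
    (∀ A ∈ S, (∀ x ∈ A, D.bar x ∈ A) ∧ D.lam ∈ A ∧ D.mu ∈ A ∧
      ∃ (m : ℕ) (v : Fin m → R), (∀ k, v k ∈ A) ∧
        ∀ x ∈ A, ∃ c : Fin m → R,
          (∀ k, c k ∈ A ∧ ∀ y ∈ A, c k * y = y * c k) ∧ x = ∑ k, c k * v k) ∧
    ∀ x : R, ∃ A ∈ S, x ∈ A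

end OddFormRingData

/-- The Jacobson radical of a (possibly noncommutative) ring. -/
def jacobsonRadical (R : Type*) [Ring R] : Ideal R := sInf {J : Ideal R | J.IsMaximal}

/-- `R` is semilocal: `R / rad R` is semisimple (hence semisimple Artinian). -/
def IsSemilocalRing (R : Type*) [Ring R] : Prop :=
  IsSemisimpleModule R (R ⧸ jacobsonRadical R)

/-- A bundled (possibly noncommutative) ring. -/
structure BundledRing : Type (u + 1) where
  carrier : Type u
  [str : Ring carrier]

attribute [instance] BundledRing.str

instance : CoeSort BundledRing (Type u) := ⟨BundledRing.carrier⟩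

universe u

namespace OddFormRingData

section Basic

variable {R : Type*} [Ring R] (D : OddFormRingData R)

lemma bar_zero : D.bar 0 = 0 := by
  have h := D.bar_add 0 0
  rw [add_zero] at h
  exact (left_eq_add.mp h)

lemma bar_neg (x : R) : D.bar (-x) = - D.bar x := by
  have h := D.bar_add x (-x)
  rw [add_neg_cancel, D.bar_zero] at h
  exact (neg_eq_of_add_eq_zero_right h.symm).symm

lemma bar_sub (x y : R) : D.bar (x - y) = D.bar x - D.bar y := by
  rw [sub_eq_add_neg, D.bar_add, D.bar_neg, sub_eq_add_neg]

lemma lam_barlam : D.lam * D.bar D.lam = 1 := by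
  have h := D.bar_bar 1
  rw [D.bar_one, D.bar_one, mul_one] at h
  exact h.symm

lemma barlam_lam : D.bar D.lam * D.lam = 1 := by
  have hinj : Function.Injective (fun x : R => D.bar (D.bar x)) :=
    D.bar_bijective.injective.comp D.bar_bijective.injective
  have : D.bar (D.bar (D.bar D.lam * D.lam)) = D.bar (D.bar 1) := by
    rw [D.bar_bar, D.bar_bar, mul_one]
    have h1 : D.lam * (D.bar D.lam * D.lam) * D.bar D.lam
        = (D.lam * D.bar D.lam) * (D.lam * D.bar D.lam) := by noncomm_ring
    rw [h1, D.lam_barlam, one_mul]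
  exact hinj this

lemma cancel_bl (c : R) : c * D.bar D.lam * D.lam = c := by
  rw [mul_assoc, D.barlam_lam, mul_one]

lemma cancel_lb (c : R) : c * D.lam * D.bar D.lam = c := by
  rw [mul_assoc, D.lam_barlam, mul_one]

lemma mu_bar : D.bar D.mu = D.mu * D.bar D.lam := by
  conv_rhs => rw [D.mu_symm]
  rw [cancel_lb]

/-- The key identity `ā μ b = bar (b̄ μ a) λ`. -/
lemma kbar (a b : R) : D.bar a * D.mu * b = D.bar (D.bar b * D.mu * a) * D.lam := by
  rw [D.bar_mul, D.bar_mul, D.mu_bar, D.bar_bar]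
  have : D.bar a * (D.mu * D.bar D.lam * (D.lam * b * D.bar D.lam)) * D.lam
      = (D.bar a * D.mu) * (D.bar D.lam * D.lam) * b * (D.bar D.lam * D.lam) := by
    noncomm_ring
  rw [this, D.barlam_lam, mul_one, mul_one]

lemma bar_conj (s r : R) : D.bar (D.bar r * s * r) * D.lam = D.bar r * D.bar s * D.lam * r := by
  rw [D.bar_mul, D.bar_mul, D.bar_bar]
  have h : D.bar r * (D.bar s * (D.lam * r * D.bar D.lam)) * D.lam
      = D.bar r * D.bar s * D.lam * r * (D.bar D.lam * D.lam) := by noncomm_ring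
  rw [h, D.barlam_lam, mul_one]

lemma bar_conj2 (s a b : R) :
    D.bar (D.bar a * s * b) * D.lam = D.bar b * D.bar s * D.lam * a := by
  rw [D.bar_mul, D.bar_mul, D.bar_bar]
  have h : D.bar b * (D.bar s * (D.lam * a * D.bar D.lam)) * D.lam
      = D.bar b * D.bar s * D.lam * a * (D.bar D.lam * D.lam) := by noncomm_ring
  rw [h, D.barlam_lam, mul_one]

end Basic

end OddFormRingData
namespace OddFormRingData

section Heis

variable {R : Type*} [Ring R] (D : OddFormRingData R)

lemma hAdd_fst (a b : R × R) : (D.hAdd a b).1 = a.1 + b.1 := rfl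
lemma hAdd_snd (a b : R × R) : (D.hAdd a b).2 = a.2 + b.2 - D.bar a.1 * D.mu * b.1 := rfl
lemma hNeg_fst (a : R × R) : (D.hNeg a).1 = -a.1 := rfl
lemma hNeg_snd (a : R × R) : (D.hNeg a).2 = -a.2 - D.bar a.1 * D.mu * a.1 := rfl
lemma hSMul_fst (a : R × R) (r : R) : (D.hSMul a r).1 = a.1 * r := rfl
lemma hSMul_snd (a : R × R) (r : R) : (D.hSMul a r).2 = D.bar r * a.2 * r := rfl

lemma hAdd_assoc (a b c : R × R) : D.hAdd (D.hAdd a b) c = D.hAdd a (D.hAdd b c) := by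
  unfold hAdd; ext
  · exact add_assoc _ _ _
  · simp only [D.bar_add]; noncomm_ring

lemma hAdd_zero (a : R × R) : D.hAdd a (0, 0) = a := by
  unfold hAdd; ext <;> simp

lemma zero_hAdd (a : R × R) : D.hAdd (0, 0) a = a := by
  unfold hAdd; ext <;> simp [D.bar_zero]

lemma hAdd_hNeg (a : R × R) : D.hAdd a (D.hNeg a) = (0, 0) := by
  unfold hAdd hNeg; ext <;> simp <;> noncomm_ring

lemma hNeg_hAdd_self (a : R × R) : D.hAdd (D.hNeg a) a = (0, 0) := by
  unfold hAdd hNeg; ext <;> simp [D.bar_neg] <;> noncomm_ring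

lemma hNeg_hNeg (a : R × R) : D.hNeg (D.hNeg a) = a := by
  unfold hNeg; ext <;> simp [D.bar_neg] <;> noncomm_ring

lemma hNeg_hAdd (a b : R × R) : D.hNeg (D.hAdd a b) = D.hAdd (D.hNeg b) (D.hNeg a) := by
  unfold hNeg hAdd; ext <;> simp [D.bar_add, D.bar_neg] <;> noncomm_ring

lemma central_comm (a : R × R) (e : R) : D.hAdd a (0, e) = D.hAdd (0, e) a := by
  unfold hAdd; ext <;> simp [D.bar_zero] <;> exact add_comm _ _

lemma hAdd_central (a : R × R) (e : R) : D.hAdd a (0, e) = (a.1, a.2 + e) := by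
  unfold hAdd; ext <;> simp

lemma central_hAdd_central (e f : R) :
    D.hAdd ((0 : R), e) ((0 : R), f) = (0, e + f) := by
  unfold hAdd; ext <;> simp [D.bar_zero]

lemma hNeg_central (e : R) : D.hNeg ((0 : R), e) = (0, -e) := by
  unfold hNeg; ext <;> simp [D.bar_zero]

lemma hSMul_hAdd (g h : R × R) (x : R) :
    D.hSMul (D.hAdd g h) x = D.hAdd (D.hSMul g x) (D.hSMul h x) := by
  unfold hSMul hAdd; ext <;> simp [D.bar_mul] <;> noncomm_ring

lemma hSMul_hSMul (a : R × R) (c r : R) :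
    D.hSMul (D.hSMul a c) r = D.hSMul a (c * r) := by
  unfold hSMul; ext <;> simp [D.bar_mul] <;> noncomm_ring

lemma hSMul_hNeg (a : R × R) (r : R) :
    D.hSMul (D.hNeg a) r = D.hNeg (D.hSMul a r) := by
  unfold hSMul hNeg; ext <;> simp [D.bar_neg, D.bar_mul] <;> noncomm_ring

end Heis

end OddFormRingData
section Sets

open OddFormRingData

variable {R : Type*} [Ring R] {D : OddFormRingData R} {Δ : Set (R × R)} {I : Set R}

section JSet

lemma J_add (hΔ : D.IsFormParam Δ) {y y' : R} (h : y ∈ JSet Δ) (h' : y' ∈ JSet Δ) : y + y' ∈ JSet Δ := by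
  obtain ⟨z, hz⟩ := h; obtain ⟨z', hz'⟩ := h'
  exact ⟨(D.hAdd (y, z) (y', z')).2, by
    have := hΔ.add_mem _ hz _ hz'; simpa [OddFormRingData.hAdd] using this⟩

lemma J_neg (hΔ : D.IsFormParam Δ) {y : R} (h : y ∈ JSet Δ) : -y ∈ JSet Δ := by
  obtain ⟨z, hz⟩ := h
  exact ⟨(D.hNeg (y, z)).2, by have := hΔ.neg_mem _ hz; simpa [OddFormRingData.hNeg] using this⟩

lemma J_mulr (hΔ : D.IsFormParam Δ) {y : R} (h : y ∈ JSet Δ) (r : R) : y * r ∈ JSet Δ := by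
  obtain ⟨z, hz⟩ := h
  exact ⟨(D.hSMul (y, z) r).2, by have := hΔ.smul_mem _ hz r; simpa [OddFormRingData.hSMul] using this⟩

end JSet

section TildeI

lemma tilde_def {x : R} : x ∈ D.tildeI Δ I ↔ ∀ y ∈ JSet Δ, D.bar y * D.mu * x ∈ I :=
  Iff.rfl

lemma tilde_add (hI : D.IsInvIdeal I) {x x' : R} (h : x ∈ D.tildeI Δ I) (h' : x' ∈ D.tildeI Δ I) :
    x + x' ∈ D.tildeI Δ I := fun y hy => by
  rw [mul_add]; exact hI.add_mem _ (h y hy) _ (h' y hy)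

lemma tilde_neg (hI : D.IsInvIdeal I) {x : R} (h : x ∈ D.tildeI Δ I) : -x ∈ D.tildeI Δ I := fun y hy => by
  rw [mul_neg]; exact hI.neg_mem _ (h y hy)

lemma tilde_sub (hI : D.IsInvIdeal I) {x x' : R} (h : x ∈ D.tildeI Δ I) (h' : x' ∈ D.tildeI Δ I) :
    x - x' ∈ D.tildeI Δ I := by
  rw [sub_eq_add_neg]; exact tilde_add hI h (tilde_neg hI h')

lemma I_sub_tilde (hI : D.IsInvIdeal I) {x : R} (h : x ∈ I) : x ∈ D.tildeI Δ I := fun y _ =>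
  hI.mul_left _ _ h

lemma tilde_mulr (hI : D.IsInvIdeal I) {x : R} (h : x ∈ D.tildeI Δ I) (r : R) : x * r ∈ D.tildeI Δ I :=
  fun y hy => by rw [← mul_assoc]; exact hI.mul_right _ _ (h y hy)

/-- `ȳ μ x ∈ I` for `y ∈ J(Δ)`, `x ∈ Ĩ`. -/
lemma mem_I_JT {y x : R} (hy : y ∈ JSet Δ) (hx : x ∈ D.tildeI Δ I) :
    D.bar y * D.mu * x ∈ I := hx y hy

/-- `x̄ μ y ∈ I` for `x ∈ Ĩ`, `y ∈ J(Δ)`. -/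
lemma mem_I_TJ (hI : D.IsInvIdeal I) {x y : R} (hx : x ∈ D.tildeI Δ I) (hy : y ∈ JSet Δ) :
    D.bar x * D.mu * y ∈ I := by
  rw [D.kbar]; exact hI.mul_right _ _ (hI.bar_mem _ (hx y hy))

end TildeI

section OMin

lemma om_base {s : R} (hs : s ∈ I) :
    ((0 : R), s - D.bar s * D.lam) ∈ D.OmegaMinSet Δ I := OmegaMin.base s hs

lemma om_add {a b : R × R} (ha : a ∈ D.OmegaMinSet Δ I) (hb : b ∈ D.OmegaMinSet Δ I) :
    D.hAdd a b ∈ D.OmegaMinSet Δ I := OmegaMin.add a b ha hb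

lemma om_neg {a : R × R} (ha : a ∈ D.OmegaMinSet Δ I) :
    D.hNeg a ∈ D.OmegaMinSet Δ I := OmegaMin.neg a ha

lemma om_zero (hI : D.IsInvIdeal I) : ((0 : R), (0 : R)) ∈ D.OmegaMinSet Δ I := by
  have h := om_base (D := D) (Δ := Δ) hI.zero_mem
  rwa [D.bar_zero, zero_mul, sub_zero] at h

lemma om_base' (hI : D.IsInvIdeal I) {s : R} (hs : s ∈ I) :
    ((0 : R), D.bar s * D.lam - s) ∈ D.OmegaMinSet Δ I := by
  have h := om_neg (om_base (D := D) (Δ := Δ) hs)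
  simp only [OddFormRingData.hNeg] at h
  simpa [D.bar_zero, neg_sub] using h

lemma om_smul (hI : D.IsInvIdeal I) {a : R × R} (ha : a ∈ D.OmegaMinSet Δ I) (r : R) :
    D.hSMul a r ∈ D.OmegaMinSet Δ I := by
  induction ha with
  | base s hs =>
      have key : D.hSMul ((0 : R), s - D.bar s * D.lam) r
          = ((0 : R), (D.bar r * s * r) - D.bar (D.bar r * s * r) * D.lam) := by
        unfold hSMul; ext
        · simp
        · rw [D.bar_conj]; noncomm_ring
      rw [key]
      exact om_base (D := D) (Δ := Δ) (hI.mul_right _ _ (hI.mul_left _ _ hs))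
  | smul a ha c hc =>
      rw [D.hSMul_hSMul]
      exact OmegaMin.smul a ha _ (hI.mul_right _ _ hc)
  | add a b _ _ iha ihb =>
      rw [D.hSMul_hAdd]; exact om_add iha ihb
  | neg a _ iha =>
      rw [D.hSMul_hNeg]; exact om_neg iha

lemma om_comps (hI : D.IsInvIdeal I) {a : R × R} (ha : a ∈ D.OmegaMinSet Δ I) : a.1 ∈ I ∧ a.2 ∈ I := by
  induction ha with
  | base s hs =>
      refine ⟨hI.zero_mem, ?_⟩
      rw [sub_eq_add_neg]
      exact hI.add_mem _ hs _ (hI.neg_mem _ (hI.mul_right _ _ (hI.bar_mem _ hs)))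
  | smul a ha c hc =>
      exact ⟨hI.mul_left _ _ hc, hI.mul_left _ _ hc⟩
  | add a b _ _ iha ihb =>
      refine ⟨hI.add_mem _ iha.1 _ ihb.1, ?_⟩
      rw [hAdd_snd, sub_eq_add_neg]
      exact hI.add_mem _ (hI.add_mem _ iha.2 _ ihb.2) _ (hI.neg_mem _ (hI.mul_left _ _ ihb.1))
  | neg a _ iha =>
      refine ⟨hI.neg_mem _ iha.1, ?_⟩
      rw [hNeg_snd, sub_eq_add_neg]
      exact hI.add_mem _ (hI.neg_mem _ iha.2) _ (hI.neg_mem _ (hI.mul_left _ _ iha.1))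

lemma om_sub_Delta (hΔ : D.IsFormParam Δ) {a : R × R} (ha : a ∈ D.OmegaMinSet Δ I) : a ∈ Δ := by
  induction ha with
  | base s hs => exact hΔ.min_le ⟨s, rfl⟩
  | smul a ha c hc => exact hΔ.smul_mem a ha c
  | add a b ha hb iha ihb => exact hΔ.add_mem a iha b ihb
  | neg a ha iha => exact hΔ.neg_mem a iha

/-- `Ω^I_min` is normal in the Heisenberg group. -/
lemma om_conj (hI : D.IsInvIdeal I) (g : R × R) {ω : R × R} (hω : ω ∈ D.OmegaMinSet Δ I) :
    D.hAdd (D.hAdd g ω) (D.hNeg g) ∈ D.OmegaMinSet Δ I := by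
  have h1 : ω.1 ∈ I := (om_comps hI hω).1
  have hsI : D.bar g.1 * D.mu * ω.1 ∈ I := hI.mul_left _ _ h1
  have key : D.hAdd (D.hAdd g ω) (D.hNeg g)
      = D.hAdd ω ((0 : R), D.bar (D.bar g.1 * D.mu * ω.1) * D.lam - D.bar g.1 * D.mu * ω.1) := by
    unfold hAdd hNeg; ext
    · simp
    · simp only [D.bar_add, D.bar_neg]
      rw [← D.kbar ω.1 g.1]
      noncomm_ring
  rw [key]
  exact om_add hω (om_base' hI hsI)

end OMin

end Sets
section IdxSums

variable {R : Type*} [Ring R] (D : OddFormRingData R) {n : ℕ}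

lemma Idx.neg_neg (i : Idx n) : i.neg.neg = i := by
  unfold Idx.neg; exact Subtype.ext (by simp)

lemma mem_posIdx {i : Idx n} : i ∈ posIdx n ↔ 0 < i.1 := by
  simp [posIdx]

lemma Idx.zero_val : (Idx.zero n).1 = 0 := rfl

lemma Idx.neg_val (i : Idx n) : (Idx.neg i).1 = -i.1 := rfl

lemma posIdx_ne_zero {i : Idx n} (hi : i ∈ posIdx n) : i ≠ Idx.zero n := by
  rw [mem_posIdx] at hi
  intro h; rw [h] at hi; exact absurd hi (by simp [Idx.zero_val])

lemma posIdx_neg_ne_zero {i : Idx n} (hi : i ∈ posIdx n) : i.neg ≠ Idx.zero n := by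
  rw [mem_posIdx] at hi
  intro h
  have := congrArg Subtype.val h
  rw [Idx.neg_val, Idx.zero_val] at this
  omega

lemma posIdx_neg_ne_self {i : Idx n} (hi : i ∈ posIdx n) : i.neg ≠ i := by
  rw [mem_posIdx] at hi
  intro h
  have := congrArg Subtype.val h
  rw [Idx.neg_val] at this
  omega

/-- Splitting a sum over all indices into `0`, positive and negative parts. -/
lemma sum_univ_split (f : Idx n → R) :
    ∑ j : Idx n, f j
      = f (Idx.zero n) + (∑ i ∈ posIdx n, f i) + ∑ i ∈ posIdx n, f i.neg := by
  classical
  have huniv : (Finset.univ : Finset (Idx n))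
      = insert (Idx.zero n) ((posIdx n) ∪ (posIdx n).image Idx.neg) := by
    ext j
    simp only [Finset.mem_univ, Finset.mem_insert, Finset.mem_union, Finset.mem_image,
      mem_posIdx, true_iff]
    rcases lt_trichotomy (j.1 : ℤ) 0 with h | h | h
    · exact Or.inr (Or.inr ⟨j.neg, by rw [Idx.neg_val]; omega, Idx.neg_neg j⟩)
    · exact Or.inl (Subtype.ext h)
    · exact Or.inr (Or.inl h)
  have hzero : Idx.zero n ∉ (posIdx n) ∪ (posIdx n).image Idx.neg := by
    simp only [Finset.mem_union, Finset.mem_image, mem_posIdx]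
    rintro (h | ⟨i, hi, hneg⟩)
    · exact absurd h (by simp [Idx.zero_val])
    · have := congrArg Subtype.val hneg
      rw [Idx.neg_val, Idx.zero_val] at this
      omega
  have hdisj : Disjoint (posIdx n) ((posIdx n).image Idx.neg) := by
    rw [Finset.disjoint_left]
    intro a ha hb
    rw [mem_posIdx] at ha
    simp only [Finset.mem_image, mem_posIdx] at hb
    obtain ⟨i, hi, hneg⟩ := hb
    have := congrArg Subtype.val hneg
    rw [Idx.neg_val] at this
    omega
  have hinj : ∀ x ∈ posIdx n, ∀ y ∈ posIdx n, Idx.neg x = Idx.neg y → x = y := by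
    intro x _ y _ h
    have := congrArg Subtype.val h
    rw [Idx.neg_val, Idx.neg_val] at this
    exact Subtype.ext (by omega)
  rw [huniv, Finset.sum_insert hzero, Finset.sum_union hdisj, Finset.sum_image hinj,
    add_assoc]

/-- `bar` of a finite sum. -/
lemma bar_sum (s : Finset (Idx n)) (f : Idx n → R) :
    D.bar (∑ i ∈ s, f i) = ∑ i ∈ s, D.bar (f i) := by
  classical
  induction s using Finset.induction_on with
  | empty => simp [D.bar_zero]
  | insert _ _ h ih => rw [Finset.sum_insert h, Finset.sum_insert h, D.bar_add, ih]

lemma lam_conj_cancel (a b : R) : a * (D.lam * b * D.bar D.lam) * D.lam = a * D.lam * b := by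
  have h : a * (D.lam * b * D.bar D.lam) * D.lam = a * D.lam * b * (D.bar D.lam * D.lam) := by
    noncomm_ring
  rw [h, D.barlam_lam, mul_one]

/-- Sum of memberships in an ideal. -/
lemma sum_mem_I {I : Set R} (hI : D.IsInvIdeal I) (s : Finset (Idx n)) (f : Idx n → R)
    (h : ∀ i ∈ s, f i ∈ I) : (∑ i ∈ s, f i) ∈ I := by
  classical
  induction s using Finset.induction_on with
  | empty => simpa using hI.zero_mem
  | insert _ _ hx ih =>
      rw [Finset.sum_insert hx]
      exact hI.add_mem _ (h _ (Finset.mem_insert_self _ _)) _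
        (ih fun i hi => h i (Finset.mem_insert_of_mem hi))

end IdxSums
section Forms

open OddFormRingData

variable {R : Type*} [Ring R] (D : OddFormRingData R) {n : ℕ}

/-- The single-entry vector. -/
def esingle (n : ℕ) (j : Idx n) (c : R) : Idx n → R := fun k => if k = j then c else 0

lemma esingle_same (j : Idx n) (c : R) : esingle n j c j = c := by simp [esingle]

lemma esingle_ne {j k : Idx n} (h : k ≠ j) (c : R) : esingle n j c k = 0 := by
  simp [esingle, h]

lemma qform_fst (u : Idx n → R) : (D.qform u).1 = u (Idx.zero n) := rfl

lemma qform_snd (u : Idx n → R) :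
    (D.qform u).2 = ∑ i ∈ posIdx n, D.bar (u i) * u i.neg := rfl

lemma qform_smul (u : Idx n → R) (x : R) :
    D.qform (fun k => u k * x) = ((D.qform u).1 * x, D.bar x * (D.qform u).2 * x) := by
  unfold qform
  ext
  · rfl
  · simp only
    rw [Finset.mul_sum, Finset.sum_mul]
    apply Finset.sum_congr rfl
    intro i _
    rw [D.bar_mul]
    noncomm_ring

lemma qform_single (j : Idx n) (c : R) :
    D.qform (esingle n j c) = (if j = Idx.zero n then c else 0, 0) := by
  unfold qform
  ext
  · simp only [esingle]
    by_cases h : j = Idx.zero n <;> simp [h, eq_comm]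
  · simp only
    apply Finset.sum_eq_zero
    intro i hi
    by_cases h : i = j
    · subst h
      rw [esingle_ne (posIdx_neg_ne_self hi), mul_zero]
    · rw [esingle_ne h, D.bar_zero, zero_mul]

lemma qform_zero : D.qform (fun _ : Idx n => (0 : R)) = (0, 0) := by
  unfold qform
  ext
  · rfl
  · simp [D.bar_zero]

/-- `b(u, e_j c)` for positive `j`. -/
lemma bform_single_pos (u : Idx n → R) {j : Idx n} (hj : 0 < j.1) (c : R) :
    D.bform u (esingle n j c) = D.bar (u j.neg) * D.lam * c := by
  unfold bform
  have h1 : ∑ i ∈ posIdx n, D.bar (u i) * esingle n j c i.neg = 0 := by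
    apply Finset.sum_eq_zero; intro i hi
    rw [esingle_ne, mul_zero]
    intro h
    have := congrArg Subtype.val h
    rw [Idx.neg_val] at this
    rw [mem_posIdx] at hi
    omega
  have h2 : esingle n j c (Idx.zero n) = 0 := by
    apply esingle_ne
    intro h
    have := congrArg Subtype.val h
    rw [Idx.zero_val] at this
    omega
  have h3 : ∑ i ∈ posIdx n, D.bar (u i.neg) * D.lam * esingle n j c i
      = D.bar (u j.neg) * D.lam * c := by
    rw [Finset.sum_eq_single j]
    · rw [esingle_same]
    · intro i _ hij
      rw [esingle_ne hij, mul_zero]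
    · intro h
      exact absurd (mem_posIdx.mpr hj) h
  rw [h1, h2, h3, mul_zero]; simp

/-- `b(u, e_0 c)`. -/
lemma bform_single_zero (u : Idx n → R) (c : R) :
    D.bform u (esingle n (Idx.zero n) c) = D.bar (u (Idx.zero n)) * D.mu * c := by
  unfold bform
  have h1 : ∑ i ∈ posIdx n, D.bar (u i) * esingle n (Idx.zero n) c i.neg = 0 := by
    apply Finset.sum_eq_zero; intro i hi
    rw [esingle_ne (posIdx_neg_ne_zero hi), mul_zero]
  have h3 : ∑ i ∈ posIdx n, D.bar (u i.neg) * D.lam * esingle n (Idx.zero n) c i = 0 := by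
    apply Finset.sum_eq_zero; intro i hi
    rw [esingle_ne (posIdx_ne_zero hi), mul_zero]
  rw [h1, h3, esingle_same, zero_add, add_zero]

/-- `b(u, e_j c)` for negative `j`. -/
lemma bform_single_neg (u : Idx n → R) {j : Idx n} (hj : j.1 < 0) (c : R) :
    D.bform u (esingle n j c) = D.bar (u j.neg) * c := by
  unfold bform
  have h1 : ∑ i ∈ posIdx n, D.bar (u i) * esingle n j c i.neg
      = D.bar (u j.neg) * c := by
    rw [Finset.sum_eq_single j.neg]
    · rw [Idx.neg_neg, esingle_same]
    · intro i hi hij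
      rw [esingle_ne, mul_zero]
      intro h
      exact hij (by rw [← h, Idx.neg_neg])
    · intro h
      exact absurd (mem_posIdx.mpr (by rw [Idx.neg_val]; omega)) h
  have h2 : esingle n j c (Idx.zero n) = 0 := by
    apply esingle_ne
    intro h
    have := congrArg Subtype.val h
    rw [Idx.zero_val] at this
    omega
  have h3 : ∑ i ∈ posIdx n, D.bar (u i.neg) * D.lam * esingle n j c i = 0 := by
    apply Finset.sum_eq_zero; intro i hi
    rw [esingle_ne, mul_zero]
    intro h
    rw [mem_posIdx] at hi
    have := congrArg Subtype.val h
    omega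
  rw [h1, h2, h3, mul_zero]; simp

/-- `b(e_0 c, u)`. -/
lemma bform_zero_single (u : Idx n → R) (c : R) :
    D.bform (esingle n (Idx.zero n) c) u = D.bar c * D.mu * u (Idx.zero n) := by
  unfold bform
  have h1 : ∑ i ∈ posIdx n, D.bar (esingle n (Idx.zero n) c i) * u i.neg = 0 := by
    apply Finset.sum_eq_zero; intro i hi
    rw [esingle_ne (posIdx_ne_zero hi), D.bar_zero, zero_mul]
  have h3 : ∑ i ∈ posIdx n, D.bar (esingle n (Idx.zero n) c i.neg) * D.lam * u i = 0 := by
    apply Finset.sum_eq_zero; intro i hi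
    rw [esingle_ne (posIdx_neg_ne_zero hi), D.bar_zero, zero_mul, zero_mul]
  rw [h1, h3, esingle_same, zero_add, add_zero]

/-- The `b`-form written with a `bar`-twisted third summand. -/
lemma bform_eq (u g : Idx n → R) :
    D.bform u g = (∑ i ∈ posIdx n, D.bar (u i) * g i.neg)
      + D.bar (u (Idx.zero n)) * D.mu * g (Idx.zero n)
      + D.bar (∑ i ∈ posIdx n, D.bar (g i) * u i.neg) * D.lam := by
  unfold bform
  congr 1
  rw [bar_sum, Finset.sum_mul]
  apply Finset.sum_congr rfl
  intro i _
  rw [D.bar_mul, D.bar_bar]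
  exact (lam_conj_cancel D _ _).symm

/-- Quadratic expansion of `qform` on a sum. -/
lemma q2_add (u g : Idx n → R) :
    (∑ i ∈ posIdx n, D.bar (u i + g i) * (u i.neg + g i.neg))
      = (∑ i ∈ posIdx n, D.bar (u i) * u i.neg)
        + (∑ i ∈ posIdx n, D.bar (g i) * g i.neg)
        + ((∑ i ∈ posIdx n, D.bar (u i) * g i.neg)
          + (∑ i ∈ posIdx n, D.bar (g i) * u i.neg)) := by
  rw [← Finset.sum_add_distrib, ← Finset.sum_add_distrib, ← Finset.sum_add_distrib]
  apply Finset.sum_congr rfl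
  intro i _
  rw [D.bar_add]
  noncomm_ring

end Forms
section SigmaFacts

open OddFormRingData

variable {R : Type*} [Ring R] {D : OddFormRingData R} {Δ : Set (R × R)} {I : Set R} {n : ℕ}

lemma hSub_fst (D : OddFormRingData R) (a b : R × R) : (D.hSub a b).1 = a.1 - b.1 := by
  unfold OddFormRingData.hSub
  rw [D.hAdd_fst, D.hNeg_fst, sub_eq_add_neg]

lemma hSub_zero (D : OddFormRingData R) (a : R × R) : D.hSub a (0, 0) = a := by
  unfold OddFormRingData.hSub
  have h : D.hNeg ((0 : R), (0 : R)) = (0, 0) := by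
    unfold OddFormRingData.hNeg; ext <;> simp [D.bar_zero]
  rw [h, D.hAdd_zero]

lemma zero_hSub (D : OddFormRingData R) (a : R × R) : D.hSub (0, 0) a = D.hNeg a := by
  unfold OddFormRingData.hSub
  rw [D.zero_hAdd]

lemma unbar_prod (D : OddFormRingData R) (v x : R) :
    D.bar D.lam * D.bar (D.bar x * D.bar v) * D.lam = v * x := by
  rw [D.bar_mul, D.bar_bar, D.bar_bar]
  have h : D.bar D.lam * (D.lam * v * D.bar D.lam * (D.lam * x * D.bar D.lam)) * D.lam
      = (D.bar D.lam * D.lam) * v * ((D.bar D.lam * D.lam) * (x * (D.bar D.lam * D.lam))) := by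
    noncomm_ring
  rw [h, D.barlam_lam]; simp

variable {σ : GLn R n}

/-- Column `0` of `σ` (as a vector). -/
local notation "cv" => (fun k => σ.val k (Idx.zero n))

lemma mulvec_esingle (A : Matrix (Idx n) (Idx n) R) (j : Idx n) (c : R) :
    Matrix.mulVec A (esingle n j c) = fun k => A k j * c := by
  funext k
  unfold Matrix.mulVec dotProduct
  rw [Finset.sum_eq_single j]
  · rw [esingle_same]
  · intro i _ hij; rw [esingle_ne hij, mul_zero]
  · intro h; exact absurd (Finset.mem_univ j) h

lemma mulvec_invcol (j : Idx n) :
    Matrix.mulVec σ.val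
      (fun k => (σ⁻¹ : GLn R n).val k j) = esingle n j 1 := by
  funext k
  unfold Matrix.mulVec dotProduct
  have h : ∑ l, σ.val k l
        * (σ⁻¹ : GLn R n).val l j
      = (σ.val * (σ⁻¹ : GLn R n).val) k j := by
    rw [Matrix.mul_apply]
  rw [h]
  have h2 : σ.val * (σ⁻¹ : GLn R n).val = 1 := by
    rw [← Units.val_mul, mul_inv_cancel, Units.val_one]
  rw [h2, Matrix.one_apply]
  simp [esingle, eq_comm]

variable (hσ : σ ∈ D.unitary Δ n)

/-- `q(σ_{*0}) ∸ (1, 0) ∈ Δ`. -/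
lemma us_delta (hσ : σ ∈ D.unitary Δ n) :
    D.hSub (D.qform cv) ((1 : R), (0 : R)) ∈ Δ := by
  have h := hσ.2 (esingle n (Idx.zero n) 1)
  rw [mulvec_esingle, qform_single, if_pos rfl] at h
  have h2 : D.qform (fun k => σ.val k (Idx.zero n) * 1)
      = D.qform cv := by
    congr 1; funext k; rw [mul_one]
  rwa [h2] at h

/-- `q(σ_{*j}) ∈ Δ` for `j ≠ 0`. -/
lemma us_theta (hσ : σ ∈ D.unitary Δ n) (j : Idx n) (hj : j ≠ Idx.zero n) :
    D.qform (fun k => σ.val k j) ∈ Δ := by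
  have h := hσ.2 (esingle n j 1)
  rw [mulvec_esingle, qform_single, if_neg hj, hSub_zero] at h
  have h2 : D.qform (fun k => σ.val k j * 1)
      = D.qform (fun k => σ.val k j) := by
    congr 1; funext k; rw [mul_one]
  rwa [h2] at h

/-- Row-`0` entries of `σ⁻¹` lie in `J(Δ)` (off the diagonal). -/
lemma us_rho (hΔ : D.IsFormParam Δ) (hσ : σ ∈ D.unitary Δ n) (j : Idx n) (hj : j ≠ Idx.zero n) :
    (σ⁻¹ : GLn R n).val (Idx.zero n) j ∈ JSet Δ := by
  have h := hσ.2 (fun k => (σ⁻¹ : GLn R n).val k j)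
  rw [mulvec_invcol, qform_single, if_neg hj, zero_hSub] at h
  have h2 := hΔ.neg_mem _ h
  rw [D.hNeg_hNeg] at h2
  exact ⟨_, h2⟩

lemma us_rho0 (hΔ : D.IsFormParam Δ) (hσ : σ ∈ D.unitary Δ n) :
    (σ⁻¹ : GLn R n).val (Idx.zero n) (Idx.zero n) - 1 ∈ JSet Δ := by
  have h := hσ.2 (fun k => (σ⁻¹ : GLn R n).val k (Idx.zero n))
  rw [mulvec_invcol, qform_single, if_pos rfl] at h
  set q := D.qform fun k => (σ⁻¹ : GLn R n).val k (Idx.zero n) with hq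
  have hmem : ((D.hSub ((1 : R), (0 : R)) q).1, (D.hSub ((1 : R), (0 : R)) q).2) ∈ Δ := by
    rw [Prod.mk.eta]; exact h
  rw [hSub_fst] at hmem
  have h1 : ((1 : R) - (σ⁻¹ : GLn R n).val (Idx.zero n) (Idx.zero n)) ∈ JSet Δ := ⟨_, hmem⟩
  have := J_neg hΔ h1
  rwa [neg_sub] at this

/-- `bar(v_i) = μ ρ_{0, -i}` for positive `i`. -/
lemma us_barv_pos (hσ : σ ∈ D.unitary Δ n) (i : Idx n) (hi : 0 < i.1) :
    D.bar (σ.val i (Idx.zero n))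
      = D.mu * (σ⁻¹ : GLn R n).val (Idx.zero n) i.neg := by
  have h := hσ.1 (esingle n (Idx.zero n) 1)
    (fun k => (σ⁻¹ : GLn R n).val k i.neg)
  rw [mulvec_esingle, mulvec_invcol] at h
  have hL : D.bform (fun k => σ.val k (Idx.zero n) * 1)
      (esingle n i.neg 1) = D.bar (σ.val i (Idx.zero n)) := by
    rw [bform_single_neg D _ (by rw [Idx.neg_val]; omega), Idx.neg_neg, mul_one, mul_one]
  have hR : D.bform (esingle n (Idx.zero n) 1)
      (fun k => (σ⁻¹ : GLn R n).val k i.neg)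
      = D.mu * (σ⁻¹ : GLn R n).val (Idx.zero n) i.neg := by
    rw [bform_zero_single, D.bar_one, one_mul]
  rw [hL, hR] at h
  exact h

/-- `bar(v_k) λ = μ ρ_{0, -k}` for negative `k`. -/
lemma us_barv_neg (hσ : σ ∈ D.unitary Δ n) (k : Idx n) (hk : k.1 < 0) :
    D.bar (σ.val k (Idx.zero n)) * D.lam
      = D.mu * (σ⁻¹ : GLn R n).val (Idx.zero n) k.neg := by
  have h := hσ.1 (esingle n (Idx.zero n) 1)
    (fun l => (σ⁻¹ : GLn R n).val l k.neg)
  rw [mulvec_esingle, mulvec_invcol] at h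
  have hL : D.bform (fun l => σ.val l (Idx.zero n) * 1)
      (esingle n k.neg 1)
      = D.bar (σ.val k (Idx.zero n)) * D.lam := by
    rw [bform_single_pos D _ (by rw [Idx.neg_val]; omega), Idx.neg_neg, mul_one, mul_one]
  have hR : D.bform (esingle n (Idx.zero n) 1)
      (fun l => (σ⁻¹ : GLn R n).val l k.neg)
      = D.mu * (σ⁻¹ : GLn R n).val (Idx.zero n) k.neg := by
    rw [bform_zero_single, D.bar_one, one_mul]
  rw [hL, hR] at h
  exact h

/-- `bar(v_0) μ = μ ρ_{00}`. -/
lemma us_barv_zero (hσ : σ ∈ D.unitary Δ n) :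
    D.bar (σ.val (Idx.zero n) (Idx.zero n)) * D.mu
      = D.mu * (σ⁻¹ : GLn R n).val (Idx.zero n) (Idx.zero n) := by
  have h := hσ.1 (esingle n (Idx.zero n) 1)
    (fun l => (σ⁻¹ : GLn R n).val l (Idx.zero n))
  rw [mulvec_esingle, mulvec_invcol] at h
  have hL : D.bform (fun l => σ.val l (Idx.zero n) * 1)
      (esingle n (Idx.zero n) 1)
      = D.bar (σ.val (Idx.zero n) (Idx.zero n)) * D.mu := by
    rw [bform_single_zero, mul_one, mul_one]
  have hR : D.bform (esingle n (Idx.zero n) 1)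
      (fun l => (σ⁻¹ : GLn R n).val l (Idx.zero n))
      = D.mu * (σ⁻¹ : GLn R n).val (Idx.zero n) (Idx.zero n) := by
    rw [bform_zero_single, D.bar_one, one_mul]
  rw [hL, hR] at h
  exact h

/-- `μ v_0 = bar(ρ_{00}) μ`. -/
lemma us_muv0 (hσ : σ ∈ D.unitary Δ n) :
    D.mu * σ.val (Idx.zero n) (Idx.zero n)
      = D.bar ((σ⁻¹ : GLn R n).val (Idx.zero n) (Idx.zero n)) * D.mu := by
  have h := congrArg D.bar (us_barv_zero hσ)
  rw [D.bar_mul, D.bar_mul, D.bar_bar, D.mu_bar] at h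
  -- h : μ λ̄ (λ v0 λ̄) = bar ρ00 * (μ λ̄)
  have hL : D.mu * D.bar D.lam * (D.lam * σ.val (Idx.zero n) (Idx.zero n) * D.bar D.lam)
      = D.mu * σ.val (Idx.zero n) (Idx.zero n) * D.bar D.lam := by
    have : D.mu * D.bar D.lam * (D.lam * σ.val (Idx.zero n) (Idx.zero n) * D.bar D.lam)
        = D.mu * (D.bar D.lam * D.lam) * (σ.val (Idx.zero n) (Idx.zero n) * D.bar D.lam) := by
      noncomm_ring
    rw [this, D.barlam_lam, mul_one, ← mul_assoc]
  rw [hL] at h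
  have := congrArg (fun z => z * D.lam) h
  rwa [D.cancel_bl, mul_assoc, mul_assoc, D.barlam_lam, mul_one] at this

end SigmaFacts
section KLemma

open OddFormRingData

variable {R : Type*} [Ring R] {D : OddFormRingData R} {Δ : Set (R × R)} {I : Set R} {n : ℕ}
variable {σ : GLn R n}

/-- The relation `b(v, v) = μ` for `v = σ_{*0}`:
`q₂(v) + bar(v₀) μ v₀ + bar(q₂(v)) λ = μ`. -/
lemma us_W (hσ : σ ∈ D.unitary Δ n) :
    (D.qform fun k => σ.val k (Idx.zero n)).2
      + D.bar (σ.val (Idx.zero n) (Idx.zero n)) * D.mu * σ.val (Idx.zero n) (Idx.zero n)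
      + D.bar ((D.qform fun k => σ.val k (Idx.zero n)).2) * D.lam = D.mu := by
  have h := hσ.1 (esingle n (Idx.zero n) 1) (esingle n (Idx.zero n) 1)
  rw [mulvec_esingle] at h
  have hR : D.bform (esingle n (Idx.zero n) 1) (esingle n (Idx.zero n) 1) = D.mu := by
    rw [bform_zero_single, esingle_same, D.bar_one, one_mul, mul_one]
  rw [hR] at h
  have hL : D.bform (fun k => σ.val k (Idx.zero n) * 1) (fun k => σ.val k (Idx.zero n) * 1)
      = (D.qform fun k => σ.val k (Idx.zero n)).2
        + D.bar (σ.val (Idx.zero n) (Idx.zero n)) * D.mu * σ.val (Idx.zero n) (Idx.zero n)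
        + D.bar ((D.qform fun k => σ.val k (Idx.zero n)).2) * D.lam := by
    have he : (fun k => σ.val k (Idx.zero n) * 1) = fun k => σ.val k (Idx.zero n) := by
      funext k; rw [mul_one]
    rw [he, bform_eq, qform_snd]
  rw [hL] at h
  exact h

/-- `(σ₀₀ - 1) x ∈ J(Δ)` for any `x`. -/
lemma us_d1x (hΔ : D.IsFormParam Δ) (hσ : σ ∈ D.unitary Δ n) (x : R) :
    (σ.val (Idx.zero n) (Idx.zero n) - 1) * x ∈ JSet Δ := by
  have hδ := us_delta hσ
  have h := hΔ.smul_mem _ hδ x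
  refine ⟨(D.hSMul (D.hSub (D.qform fun k => σ.val k (Idx.zero n)) ((1 : R), (0 : R))) x).2, ?_⟩
  have hfst : (D.hSMul (D.hSub (D.qform fun k => σ.val k (Idx.zero n)) ((1 : R), (0 : R))) x).1
      = (σ.val (Idx.zero n) (Idx.zero n) - 1) * x := by
    rw [D.hSMul_fst, hSub_fst, qform_fst]
  rw [← hfst, Prod.mk.eta]
  exact h

/-- `σ₀₀ x ∈ Ĩ` for `x ∈ Ĩ`. -/
lemma us_w1tilde (hΔ : D.IsFormParam Δ) (hI : D.IsInvIdeal I) (hσ : σ ∈ D.unitary Δ n)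
    {x : R} (hx : x ∈ D.tildeI Δ I) :
    σ.val (Idx.zero n) (Idx.zero n) * x ∈ D.tildeI Δ I := by
  intro y hy
  have key : D.bar y * D.mu * (σ.val (Idx.zero n) (Idx.zero n) * x)
      = D.bar ((σ⁻¹ : GLn R n).val (Idx.zero n) (Idx.zero n) * y) * D.mu * x := by
    rw [D.bar_mul]
    have h0 := us_muv0 hσ
    calc D.bar y * D.mu * (σ.val (Idx.zero n) (Idx.zero n) * x)
        = D.bar y * (D.mu * σ.val (Idx.zero n) (Idx.zero n)) * x := by noncomm_ring
      _ = D.bar y * (D.bar ((σ⁻¹ : GLn R n).val (Idx.zero n) (Idx.zero n)) * D.mu) * x := by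
          rw [h0]
      _ = D.bar y * D.bar ((σ⁻¹ : GLn R n).val (Idx.zero n) (Idx.zero n)) * D.mu * x := by
          noncomm_ring
  rw [key]
  have hmem : (σ⁻¹ : GLn R n).val (Idx.zero n) (Idx.zero n) * y ∈ JSet Δ := by
    have : (σ⁻¹ : GLn R n).val (Idx.zero n) (Idx.zero n) * y
        = y + ((σ⁻¹ : GLn R n).val (Idx.zero n) (Idx.zero n) - 1) * y := by noncomm_ring
    rw [this]
    exact J_add hΔ hy (J_mulr hΔ (us_rho0 hΔ hσ) y)
  exact mem_I_JT hmem hx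

/-- The key lemma: `x̄' q₂(σ_{*0}) x ∈ I` for `x, x' ∈ Ĩ ∩ J(Δ)`. -/
lemma us_K (hΔ : D.IsFormParam Δ) (hI : D.IsInvIdeal I) (hσ : σ ∈ D.unitary Δ n)
    {x x' : R} (hx : x ∈ D.tildeI Δ I) (hxJ : x ∈ JSet Δ)
    (hx' : x' ∈ D.tildeI Δ I) (hx'J : x' ∈ JSet Δ) :
    D.bar x' * (D.qform fun k => σ.val k (Idx.zero n)).2 * x ∈ I := by
  classical
  set ρ : Matrix (Idx n) (Idx n) R := (σ⁻¹ : GLn R n).val with hρ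
  -- Step 1: rewrite as a sum of `x̄' μ (ρ_{0,-i} v_{-i} x)` terms
  have step1 : D.bar x' * (D.qform fun k => σ.val k (Idx.zero n)).2 * x
      = ∑ i ∈ posIdx n,
          D.bar x' * D.mu * (ρ (Idx.zero n) i.neg * (σ.val i.neg (Idx.zero n) * x)) := by
    rw [qform_snd, Finset.mul_sum, Finset.sum_mul]
    apply Finset.sum_congr rfl
    intro i hi
    rw [us_barv_pos hσ i (mem_posIdx.mp hi)]
    noncomm_ring
  -- Step 2: the inverse relation
  have hinv : ∑ j : Idx n, ρ (Idx.zero n) j * (σ.val j (Idx.zero n) * x) = x := by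
    have h1 : ∑ j : Idx n, ρ (Idx.zero n) j * σ.val j (Idx.zero n) = 1 := by
      have h2 : (ρ * σ.val) (Idx.zero n) (Idx.zero n) = 1 := by
        rw [hρ, ← Units.val_mul, inv_mul_cancel, Units.val_one, Matrix.one_apply_eq]
      rw [← h2, Matrix.mul_apply]
    calc ∑ j : Idx n, ρ (Idx.zero n) j * (σ.val j (Idx.zero n) * x)
        = (∑ j : Idx n, ρ (Idx.zero n) j * σ.val j (Idx.zero n)) * x := by
          rw [Finset.sum_mul]; apply Finset.sum_congr rfl; intro j _; rw [mul_assoc]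
      _ = x := by rw [h1, one_mul]
  have split := sum_univ_split (n := n)
    (fun j => ρ (Idx.zero n) j * (σ.val j (Idx.zero n) * x))
  rw [hinv] at split
  set A : R := ∑ i ∈ posIdx n, ρ (Idx.zero n) i * (σ.val i (Idx.zero n) * x) with hA
  set B : R := ∑ i ∈ posIdx n, ρ (Idx.zero n) i.neg * (σ.val i.neg (Idx.zero n) * x) with hB
  set F0 : R := ρ (Idx.zero n) (Idx.zero n) * (σ.val (Idx.zero n) (Idx.zero n) * x) with hF0
  have step2 : B = x - F0 - A := by rw [split]; abel
  -- Step 3: memberships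
  rw [step1]
  have hsum : ∑ i ∈ posIdx n,
      D.bar x' * D.mu * (ρ (Idx.zero n) i.neg * (σ.val i.neg (Idx.zero n) * x))
      = D.bar x' * D.mu * B := by
    rw [hB, Finset.mul_sum]
  rw [hsum, step2, mul_sub, mul_sub, sub_eq_add_neg, sub_eq_add_neg]
  have m1 : D.bar x' * D.mu * x ∈ I := mem_I_JT hx'J hx
  have m2 : D.bar x' * D.mu * F0 ∈ I := by
    have hd : F0 = x + ((σ.val (Idx.zero n) (Idx.zero n) - 1) * x
        + ((σ⁻¹ : GLn R n).val (Idx.zero n) (Idx.zero n) - 1)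
          * (σ.val (Idx.zero n) (Idx.zero n) * x)) := by
      rw [hF0, hρ]; noncomm_ring
    rw [hd, mul_add, mul_add]
    exact hI.add_mem _ m1 _ (hI.add_mem _
      (mem_I_TJ hI hx' (us_d1x hΔ hσ x)) _
      (mem_I_TJ hI hx' (J_mulr hΔ (by rw [hρ] at *; exact us_rho0 hΔ hσ) _)))
  have m3 : D.bar x' * D.mu * A ∈ I := by
    rw [hA, Finset.mul_sum]
    apply sum_mem_I D hI
    intro i hi
    exact mem_I_TJ hI hx'
      (J_mulr hΔ (by rw [hρ]; exact us_rho hΔ hσ i (posIdx_ne_zero hi)) _)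
  exact hI.add_mem _ (hI.add_mem _ m1 _ (hI.neg_mem _ m2)) _ (hI.neg_mem _ m3)

end KLemma
section Defect

open OddFormRingData

variable {R : Type*} [Ring R] {D : OddFormRingData R} {Δ : Set (R × R)} {I : Set R} {n : ℕ}
variable {σ : GLn R n}

/-- The quadratic defect `q(σu) ∸ q(u)`. -/
def defect (D : OddFormRingData R) (σ : GLn R n) (u : Idx n → R) : R × R :=
  D.hSub (D.qform (Matrix.mulVec σ.val u)) (D.qform u)

/-- The cross term in the quadratic expansion of `q`. -/
def crossTerm (D : OddFormRingData R) {n : ℕ} (u g : Idx n → R) : R :=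
  (∑ i ∈ posIdx n, D.bar (u i) * g i.neg) + (∑ i ∈ posIdx n, D.bar (g i) * u i.neg)
    + D.bar (u (Idx.zero n)) * D.mu * g (Idx.zero n)

lemma qform_add (u g : Idx n → R) :
    D.qform (u + g) = D.hAdd (D.hAdd (D.qform u) (D.qform g)) (0, crossTerm D u g) := by
  unfold crossTerm
  ext
  · simp only [hAdd_fst, qform_fst, Pi.add_apply]
    rw [add_zero]
  · simp only [hAdd_snd, hAdd_fst, qform_fst, qform_snd, Pi.add_apply]
    rw [q2_add]
    simp only [D.bar_zero, zero_mul, mul_zero, sub_zero]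
    abel

lemma cross_eq_bform (u g : Idx n → R) :
    crossTerm D u g = D.bform u g
      + ((∑ i ∈ posIdx n, D.bar (g i) * u i.neg)
        - D.bar (∑ i ∈ posIdx n, D.bar (g i) * u i.neg) * D.lam) := by
  rw [bform_eq]
  unfold crossTerm
  abel

lemma crossI_mem {I : Set R} (hI : D.IsInvIdeal I) (u g : Idx n → R) (hg : ∀ k, g k ∈ I) :
    (∑ i ∈ posIdx n, D.bar (g i) * u i.neg) ∈ I := by
  apply sum_mem_I D hI
  intro i _
  exact hI.mul_right _ _ (hI.bar_mem _ (hg i))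

lemma defect_mem_Delta (hσ : σ ∈ D.unitary Δ n) (u : Idx n → R) : defect D σ u ∈ Δ := hσ.2 u

lemma defect_zero_vec (hI : D.IsInvIdeal I) : defect D σ (fun _ => (0 : R)) ∈ D.OmegaMinSet Δ I := by
  unfold defect
  have h0 : (fun _ : Idx n => (0 : R)) = (0 : Idx n → R) := rfl
  rw [h0, Matrix.mulVec_zero]
  have h1 : D.qform (0 : Idx n → R) = ((0 : R), (0 : R)) := by
    unfold OddFormRingData.qform
    ext
    · rfl
    · simp [D.bar_zero]
  rw [h1, hSub_zero]
  exact om_zero hI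

/-- Defect of a single-entry `I`-vector lies in `Ω_min`. -/
lemma defect_single (hΔ : D.IsFormParam Δ) (hσ : σ ∈ D.unitary Δ n) (j : Idx n) {c : R}
    (hc : c ∈ I) : defect D σ (esingle n j c) ∈ D.OmegaMinSet Δ I := by
  unfold defect
  by_cases hj : j = Idx.zero n
  · subst hj
    have key : D.hSub (D.qform (Matrix.mulVec σ.val (esingle n (Idx.zero n) c)))
        (D.qform (esingle n (Idx.zero n) c))
        = D.hSMul (D.hSub (D.qform fun k => σ.val k (Idx.zero n)) ((1 : R), (0 : R))) c := by
      rw [mulvec_esingle, qform_smul, qform_single, if_pos rfl]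
      unfold OddFormRingData.hSub OddFormRingData.hAdd OddFormRingData.hNeg OddFormRingData.hSMul
      ext
      · simp only [qform_fst]
        noncomm_ring
      · simp only [qform_fst, D.bar_mul, D.bar_one]
        noncomm_ring
    rw [key]
    exact OmegaMin.smul _ (us_delta hσ) c hc
  · have key : D.hSub (D.qform (Matrix.mulVec σ.val (esingle n j c)))
        (D.qform (esingle n j c))
        = D.hSMul (D.qform fun k => σ.val k j) c := by
      rw [mulvec_esingle, qform_smul, qform_single, if_neg hj, hSub_zero]
      rfl
    rw [key]
    exact OmegaMin.smul _ (us_theta hσ j hj) c hc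

/-- The conjugation-splitting identity for defects of sums. -/
lemma defect_add (u g : Idx n → R) :
    defect D σ (u + g)
      = D.hAdd (D.hAdd (D.hAdd (D.hAdd (D.qform (Matrix.mulVec σ.val u)) (defect D σ g))
            (D.hNeg (D.qform (Matrix.mulVec σ.val u)))) (defect D σ u))
          (0, crossTerm D (Matrix.mulVec σ.val u) (Matrix.mulVec σ.val g) - crossTerm D u g) := by
  unfold defect crossTerm OddFormRingData.hSub
  rw [Matrix.mulVec_add]
  ext
  · simp only [hAdd_fst, hNeg_fst, qform_fst, Pi.add_apply]
    abel
  · simp only [hAdd_snd, hAdd_fst, hNeg_snd, hNeg_fst, qform_fst, qform_snd, Pi.add_apply]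
    rw [q2_add, q2_add]
    simp only [D.bar_add, D.bar_neg, D.bar_zero]
    noncomm_ring

/-- GL-a: the defect of an `I`-vector lies in `Ω_min`. -/
lemma defect_I (hΔ : D.IsFormParam Δ) (hI : D.IsInvIdeal I) (hσ : σ ∈ D.unitary Δ n)
    (g : Idx n → R) (hg : ∀ k, g k ∈ I) : defect D σ g ∈ D.OmegaMinSet Δ I := by
  classical
  suffices H : ∀ s : Finset (Idx n), ∀ g : Idx n → R, (∀ k, g k ∈ I) →
      (∀ k ∉ s, g k = 0) → defect D σ g ∈ D.OmegaMinSet Δ I by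
    exact H Finset.univ g hg (fun k hk => absurd (Finset.mem_univ k) hk)
  intro s
  induction s using Finset.induction_on with
  | empty =>
      intro g hg h0
      have : g = fun _ => 0 := funext fun k => h0 k (Finset.notMem_empty k)
      rw [this]
      exact defect_zero_vec hI
  | @insert j s hj ih =>
      intro g hg h0
      set g' : Idx n → R := Function.update g j 0 with hg'
      have hsplit : g = g' + esingle n j (g j) := by
        funext k
        by_cases hk : k = j
        · subst hk
          simp [hg', esingle_same, Function.update_self]
        · simp [hg', esingle_ne hk, Function.update_of_ne hk]
      have hg'I : ∀ k, g' k ∈ I := by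
        intro k
        by_cases hk : k = j
        · subst hk; simp [hg', Function.update_self]; exact hI.zero_mem
        · simp [hg', Function.update_of_ne hk]; exact hg k
      have hg'0 : ∀ k ∉ s, g' k = 0 := by
        intro k hk
        by_cases hkj : k = j
        · subst hkj; simp [hg', Function.update_self]
        · simp [hg', Function.update_of_ne hkj]
          exact h0 k (by simp [Finset.mem_insert, hkj, hk])
      rw [hsplit, defect_add]
      apply om_add
      apply om_add
      · -- conjugated single defect and then defect g'
        exact om_conj hI _ (defect_single hΔ hσ j (hg j))
      · exact ih g' hg'I hg'0
      · -- the central cross-difference term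
        set S1 : R := ∑ i ∈ posIdx n,
          D.bar (Matrix.mulVec σ.val (esingle n j (g j)) i) * Matrix.mulVec σ.val g' i.neg
          with hS1
        set S2 : R := ∑ i ∈ posIdx n, D.bar (esingle n j (g j) i) * g' i.neg with hS2
        have hS1I : S1 ∈ I := by
          rw [hS1]
          apply crossI_mem hI
          intro k
          rw [mulvec_esingle]
          exact hI.mul_left _ _ (hg j)
        have hS2I : S2 ∈ I := by
          rw [hS2]
          apply crossI_mem hI
          intro k
          unfold esingle
          by_cases hk : k = j
          · simp [hk]; exact hg j
          · simp [hk]; exact hI.zero_mem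
        have hb : D.bform (Matrix.mulVec σ.val g') (Matrix.mulVec σ.val (esingle n j (g j)))
            = D.bform g' (esingle n j (g j)) := hσ.1 _ _
        have key : crossTerm D (Matrix.mulVec σ.val g') (Matrix.mulVec σ.val (esingle n j (g j)))
              - crossTerm D g' (esingle n j (g j))
            = (S1 - D.bar S1 * D.lam) + -(S2 - D.bar S2 * D.lam) := by
          rw [cross_eq_bform, cross_eq_bform, hb, hS1, hS2]
          abel
        have h3 : D.hAdd ((0 : R), S1 - D.bar S1 * D.lam)
              (D.hNeg ((0 : R), S2 - D.bar S2 * D.lam))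
            = ((0 : R), (S1 - D.bar S1 * D.lam) + -(S2 - D.bar S2 * D.lam)) := by
          rw [D.hNeg_central, D.central_hAdd_central]
        rw [key, ← h3]
        exact om_add (om_base hS1I) (om_neg (om_base hS2I))

end Defect
section Canon

open OddFormRingData

variable {R : Type*} [Ring R] {D : OddFormRingData R} {Δ : Set (R × R)} {I : Set R} {n : ℕ}

/-- The canonical core element `q(v)•x ∔ (0,y) = (w₁x, x̄w₂x + y)`. -/
def Cc (D : OddFormRingData R) (w : R × R) (x y : R) : R × R :=
  (w.1 * x, D.bar x * w.2 * x + y)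

lemma hSub_one_pair (D : OddFormRingData R) (w : R × R) :
    D.hSub w ((1 : R), (0 : R)) = (w.1 - 1, w.2 - D.mu + D.bar w.1 * D.mu) := by
  unfold OddFormRingData.hSub OddFormRingData.hAdd OddFormRingData.hNeg
  ext
  · simp only []; abel
  · simp only [D.bar_one]; noncomm_ring

/-- Canonical form of the defining expression of `^σΩ`. -/
lemma canon (D : OddFormRingData R) (w : R × R) (x y : R) :
    D.hAdd (D.hSMul (D.hSub w ((1 : R), (0 : R))) x) (x, y) = Cc D w x y := by
  rw [hSub_one_pair]
  unfold OddFormRingData.hAdd OddFormRingData.hSMul Cc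
  ext
  · simp only []; noncomm_ring
  · simp only [D.bar_mul, D.bar_sub, D.bar_one]; noncomm_ring

lemma mem_trans {Ω : Set (R × R)} {σ : GLn R n} {p : R × R} :
    p ∈ D.transportedParam Δ I Ω n σ
      ↔ ∃ x y : R, (x, y) ∈ Ω ∧ ∃ m ∈ D.OmegaMinSet Δ I,
          p = D.hAdd (Cc D (D.qform fun i => σ.val i (Idx.zero n)) x y) m := by
  unfold OddFormRingData.transportedParam
  constructor
  · rintro ⟨x, y, hxy, m, hm, rfl⟩
    exact ⟨x, y, hxy, m, hm, by rw [canon]⟩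
  · rintro ⟨x, y, hxy, m, hm, rfl⟩
    exact ⟨x, y, hxy, m, hm, by rw [canon]⟩

/-- Addition law for core elements. -/
lemma Cc_add {w : R × R}
    (hW : w.2 + D.bar w.1 * D.mu * w.1 + D.bar w.2 * D.lam = D.mu) (x1 y1 x2 y2 : R) :
    D.hAdd (Cc D w x1 y1) (Cc D w x2 y2)
      = D.hAdd (Cc D w (x1 + x2) (y1 + y2 - D.bar x1 * D.mu * x2))
          ((0 : R), D.bar (D.bar x2 * w.2 * x1) * D.lam - D.bar x2 * w.2 * x1) := by
  have h2 : w.2 + D.bar w.1 * D.mu * w.1 + D.bar w.2 * D.lam - w.2 - D.bar w.2 * D.lam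
      = D.mu - w.2 - D.bar w.2 * D.lam := by rw [hW]
  have hW' : D.bar w.1 * D.mu * w.1 = D.mu - w.2 - D.bar w.2 * D.lam := by
    rw [← h2]; abel
  unfold OddFormRingData.hAdd Cc
  ext
  · simp only []; noncomm_ring
  · simp only []
    have ht : D.bar (w.1 * x1) * D.mu * (w.1 * x2)
        = D.bar x1 * (D.bar w.1 * D.mu * w.1) * x2 := by
      rw [D.bar_mul]; noncomm_ring
    rw [ht, hW', D.bar_conj2, D.bar_add]
    noncomm_ring

/-- Negation law for core elements. -/
lemma Cc_neg {w : R × R}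
    (hW : w.2 + D.bar w.1 * D.mu * w.1 + D.bar w.2 * D.lam = D.mu) (x y : R) :
    D.hNeg (Cc D w x y)
      = D.hAdd (Cc D w (-x) (-y - D.bar x * D.mu * x))
          ((0 : R), D.bar (D.bar x * w.2 * x) * D.lam - D.bar x * w.2 * x) := by
  have h2 : w.2 + D.bar w.1 * D.mu * w.1 + D.bar w.2 * D.lam - w.2 - D.bar w.2 * D.lam
      = D.mu - w.2 - D.bar w.2 * D.lam := by rw [hW]
  have hW' : D.bar w.1 * D.mu * w.1 = D.mu - w.2 - D.bar w.2 * D.lam := by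
    rw [← h2]; abel
  unfold OddFormRingData.hNeg OddFormRingData.hAdd Cc
  ext
  · simp only []; noncomm_ring
  · simp only []
    have ht : D.bar (w.1 * x) * D.mu * (w.1 * x)
        = D.bar x * (D.bar w.1 * D.mu * w.1) * x := by
      rw [D.bar_mul]; noncomm_ring
    rw [ht, hW', D.bar_conj2, D.bar_neg]
    noncomm_ring

/-- Scalar law. -/
lemma Cc_smul (w : R × R) (x y : R) (m : R × R) (r : R) :
    D.hSMul (D.hAdd (Cc D w x y) m) r
      = D.hAdd (Cc D w (x * r) (D.bar r * y * r)) (D.hSMul m r) := by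
  unfold OddFormRingData.hSMul OddFormRingData.hAdd Cc
  ext
  · simp only []; noncomm_ring
  · simp only [D.bar_mul]; noncomm_ring

/-- Regrouping: `(a ∔ m) ∔ (b ∔ m') = (a ∔ b) ∔ ((b⁻¹ ∔ m ∔ b) ∔ m')`. -/
lemma hAdd_reassoc (a m b m' : R × R) :
    D.hAdd (D.hAdd a m) (D.hAdd b m')
      = D.hAdd (D.hAdd a b) (D.hAdd (D.hAdd (D.hAdd (D.hNeg b) m) b) m') := by
  unfold OddFormRingData.hAdd OddFormRingData.hNeg
  ext
  · simp only []; abel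
  · simp only [D.bar_add, D.bar_neg]; noncomm_ring

/-- Conjugated `Ω_min`-element is in `Ω_min` (inverted conjugation order). -/
lemma om_conj' (hI : D.IsInvIdeal I) (g : R × R) {ω : R × R} (hω : ω ∈ D.OmegaMinSet Δ I) :
    D.hAdd (D.hAdd (D.hNeg g) ω) g ∈ D.OmegaMinSet Δ I := by
  have h := om_conj hI (D.hNeg g) hω
  rwa [D.hNeg_hNeg] at h

/-- `hNeg (c ∔ m) = c⁻¹ ∔ (c ∔ m⁻¹ ∔ c⁻¹)`. -/
lemma hNeg_reassoc (c m : R × R) :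
    D.hNeg (D.hAdd c m)
      = D.hAdd (D.hNeg c) (D.hAdd (D.hAdd c (D.hNeg m)) (D.hNeg c)) := by
  unfold OddFormRingData.hAdd OddFormRingData.hNeg
  ext
  · simp only []; abel
  · simp only [D.bar_add, D.bar_neg]; noncomm_ring

lemma hAdd_cancel_left (a b : R × R) : D.hAdd a (D.hAdd (D.hNeg a) b) = b := by
  unfold OddFormRingData.hAdd OddFormRingData.hNeg
  ext
  · simp only []; abel
  · simp only [D.bar_neg]; noncomm_ring

lemma hAdd_cancel_right (a b : R × R) : D.hAdd (D.hAdd a b) (D.hNeg b) = a := by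
  unfold OddFormRingData.hAdd OddFormRingData.hNeg
  ext
  · simp only []; abel
  · simp only [D.bar_add, D.bar_neg]; noncomm_ring

lemma hSub_hAdd_cancel (a b : R × R) : D.hAdd (D.hSub a b) b = a := by
  unfold OddFormRingData.hSub OddFormRingData.hAdd OddFormRingData.hNeg
  ext
  · simp only []; abel
  · simp only [D.bar_add, D.bar_neg]; noncomm_ring

end Canon
section PartThreeCore

open OddFormRingData

variable {R : Type*} [Ring R] {D : OddFormRingData R} {Δ : Set (R × R)} {I : Set R} {n : ℕ}
variable {σ τ : GLn R n}

lemma ne_zero_val {k : Idx n} (hk : k ≠ Idx.zero n) : k.1 ≠ 0 := by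
  intro h
  exact hk (Subtype.ext h)

/-- `τ_{k0} x ∈ I` for `k ≠ 0` and `x ∈ Ĩ`. -/
lemma us_colI (hΔ : D.IsFormParam Δ) (hI : D.IsInvIdeal I) (hτ : τ ∈ D.unitary Δ n)
    (k : Idx n) (hk : k ≠ Idx.zero n) {x : R} (hx : x ∈ D.tildeI Δ I) :
    τ.val k (Idx.zero n) * x ∈ I := by
  have hkneg : k.neg ≠ Idx.zero n := by
    intro h
    have := congrArg Subtype.val h
    rw [Idx.neg_val, Idx.zero_val] at this
    exact ne_zero_val hk (by omega)
  have h1 : D.bar x * D.bar (τ.val k (Idx.zero n)) ∈ I := by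
    rcases lt_trichotomy (k.1 : ℤ) 0 with hneg | h0 | hpos
    · -- negative index
      have hb := us_barv_neg hτ k hneg
      have h2 : D.bar (τ.val k (Idx.zero n))
          = D.mu * ((τ⁻¹ : GLn R n).val (Idx.zero n) k.neg * D.bar D.lam) := by
        have := congrArg (fun z => z * D.bar D.lam) hb
        rw [D.cancel_lb] at this
        rw [this, mul_assoc]
      rw [h2, ← mul_assoc]
      exact mem_I_TJ hI hx (J_mulr hΔ (us_rho hΔ hτ k.neg hkneg) _)
    · exact absurd h0 (ne_zero_val hk)
    · have hb := us_barv_pos hτ k hpos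
      rw [hb, ← mul_assoc]
      exact mem_I_TJ hI hx (us_rho hΔ hτ k.neg hkneg)
  have key : τ.val k (Idx.zero n) * x
      = D.bar D.lam * D.bar (D.bar x * D.bar (τ.val k (Idx.zero n))) * D.lam :=
    (unbar_prod D _ _).symm
  rw [key]
  exact hI.mul_right _ _ (hI.mul_left _ _ (hI.bar_mem _ h1))

/-- The exact group identity underlying the cocycle property. -/
lemma P3eq (u g : Idx n → R) (hg0 : g (Idx.zero n) = 0) (y : R) :
    D.hAdd (D.qform (Matrix.mulVec σ.val u)) ((0 : R), (D.qform g).2 + y)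
      = D.hAdd (D.hAdd (D.qform (Matrix.mulVec σ.val (u + g))) ((0 : R), y))
          (D.hAdd (D.hNeg (defect D σ g))
            ((0 : R), - crossTerm D (Matrix.mulVec σ.val u) (Matrix.mulVec σ.val g))) := by
  unfold defect crossTerm OddFormRingData.hSub
  rw [Matrix.mulVec_add]
  ext
  · simp only [hAdd_fst, hNeg_fst, qform_fst, Pi.add_apply, hg0]
    abel
  · simp only [hAdd_snd, hAdd_fst, hNeg_snd, hNeg_fst, qform_fst, qform_snd, Pi.add_apply, hg0]
    rw [q2_add]
    simp only [D.bar_add, D.bar_neg, D.bar_zero]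
    noncomm_ring

/-- The core cocycle lemma. -/
lemma P3core (hΔ : D.IsFormParam Δ) (hI : D.IsInvIdeal I) (hσ : σ ∈ D.unitary Δ n)
    (hτ : τ ∈ D.unitary Δ n) {x : R} (hx : x ∈ D.tildeI Δ I) (y : R) :
    ∃ ω ∈ D.OmegaMinSet Δ I,
      Cc D (D.qform fun i => σ.val i (Idx.zero n))
          ((D.qform fun i => τ.val i (Idx.zero n)).1 * x)
          (D.bar x * (D.qform fun i => τ.val i (Idx.zero n)).2 * x + y)
        = D.hAdd (Cc D (D.qform fun i => (σ * τ).val i (Idx.zero n)) x y) ω := by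
  classical
  set a : R := (D.qform fun i => τ.val i (Idx.zero n)).1 * x with ha
  set uτ : Idx n → R := fun k => τ.val k (Idx.zero n) * x with huτ
  set u : Idx n → R := esingle n (Idx.zero n) a with hu
  set g : Idx n → R := fun k => uτ k - u k with hgdef
  have hug : u + g = uτ := by
    funext k
    simp [hgdef]
  have hg0 : g (Idx.zero n) = 0 := by
    simp only [hgdef, huτ, hu, esingle_same, ha]
    rw [qform_fst, sub_self]
  have hgI : ∀ k, g k ∈ I := by
    intro k
    by_cases hk : k = Idx.zero n
    · rw [hk, hg0]; exact hI.zero_mem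
    · simp only [hgdef, huτ, hu, esingle_ne hk]
      rw [sub_zero]
      exact us_colI hΔ hI hτ k hk hx
  -- identify the pieces
  have hq1 : D.qform (Matrix.mulVec σ.val u)
      = ((D.qform fun i => σ.val i (Idx.zero n)).1 * a,
          D.bar a * (D.qform fun i => σ.val i (Idx.zero n)).2 * a) := by
    rw [hu, mulvec_esingle, qform_smul]
  have hq2 : (D.qform g).2 = D.bar x * (D.qform fun i => τ.val i (Idx.zero n)).2 * x := by
    have h1 : (D.qform g).2 = (D.qform uτ).2 := by
      rw [qform_snd, qform_snd]
      apply Finset.sum_congr rfl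
      intro i hi
      have e1 : g i = uτ i := by
        simp only [hgdef, hu, esingle_ne (posIdx_ne_zero hi)]
        rw [sub_zero]
      have e2 : g i.neg = uτ i.neg := by
        simp only [hgdef, hu, esingle_ne (posIdx_neg_ne_zero hi)]
        rw [sub_zero]
      rw [e1, e2]
    rw [h1, huτ, qform_smul]
  have hq3 : D.qform (Matrix.mulVec σ.val (u + g))
      = ((D.qform fun i => (σ * τ).val i (Idx.zero n)).1 * x,
          D.bar x * (D.qform fun i => (σ * τ).val i (Idx.zero n)).2 * x) := by
    rw [hug]
    have hmv : Matrix.mulVec σ.val uτ = fun k => (σ * τ).val k (Idx.zero n) * x := by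
      funext k
      unfold Matrix.mulVec dotProduct
      rw [Units.val_mul, Matrix.mul_apply, Finset.sum_mul]
      apply Finset.sum_congr rfl
      intro l _
      simp only [huτ]
      rw [mul_assoc]
    rw [hmv, qform_smul]
  -- the Ω_min element
  set S1 : R := ∑ i ∈ posIdx n,
    D.bar (Matrix.mulVec σ.val g i) * Matrix.mulVec σ.val u i.neg with hS1
  have hS1I : S1 ∈ I := by
    rw [hS1]
    apply crossI_mem hI
    intro k
    unfold Matrix.mulVec dotProduct
    apply sum_mem_I D hI
    intro l _
    exact hI.mul_left _ _ (hgI l)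
  have hcross : crossTerm D (Matrix.mulVec σ.val u) (Matrix.mulVec σ.val g)
      = S1 - D.bar S1 * D.lam := by
    rw [cross_eq_bform, hσ.1 u g, hS1]
    have hb0 : D.bform u g = 0 := by
      rw [hu, bform_zero_single, hg0, mul_zero]
    rw [hb0, zero_add]
  set ω : R × R := D.hAdd (D.hNeg (defect D σ g))
    ((0 : R), - crossTerm D (Matrix.mulVec σ.val u) (Matrix.mulVec σ.val g)) with hω
  refine ⟨ω, ?_, ?_⟩
  · rw [hω]
    apply om_add
    · exact om_neg (defect_I hΔ hI hσ g hgI)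
    · have hmem : ((0 : R), crossTerm D (Matrix.mulVec σ.val u) (Matrix.mulVec σ.val g))
          ∈ D.OmegaMinSet Δ I := by
        rw [hcross]
        exact om_base (D := D) (Δ := Δ) hS1I
      have := om_neg hmem
      rwa [D.hNeg_central] at this
  · have hmain := P3eq (D := D) (σ := σ) u g hg0 y
    have lhs_eq : Cc D (D.qform fun i => σ.val i (Idx.zero n)) a ((D.qform g).2 + y)
        = D.hAdd (D.qform (Matrix.mulVec σ.val u)) ((0 : R), (D.qform g).2 + y) := by
      rw [hq1]
      unfold Cc OddFormRingData.hAdd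
      ext
      · simp only []; rw [add_zero]
      · simp only [D.bar_zero]
        noncomm_ring
    have rhs_eq : D.hAdd (D.qform (Matrix.mulVec σ.val (u + g))) ((0 : R), y)
        = Cc D (D.qform fun i => (σ * τ).val i (Idx.zero n)) x y := by
      rw [hq3]
      unfold Cc OddFormRingData.hAdd
      ext
      · simp only []; rw [add_zero]
      · simp only [D.bar_zero]
        noncomm_ring
    rw [← hq2, lhs_eq, hmain, rhs_eq, ← hω]

end PartThreeCore
section BRKsec

open OddFormRingData

variable {R : Type*} [Ring R] {D : OddFormRingData R} {Δ : Set (R × R)} {I : Set R} {n : ℕ}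

/-- The `m'`-reduction (bracket) identity. -/
lemma BRK {w : R × R} (hW : w.2 + D.bar w.1 * D.mu * w.1 + D.bar w.2 * D.lam = D.mu)
    (a b : R) (m' : R × R) :
    Cc D w (a + m'.1) (b + m'.2 - D.bar a * D.mu * m'.1)
      = D.hAdd (Cc D w a b)
          (D.hAdd (D.hAdd (D.hSMul (D.hSub w ((1 : R), (0 : R))) m'.1) m')
            ((0 : R), D.bar m'.1 * w.2 * a - D.bar (D.bar m'.1 * w.2 * a) * D.lam)) := by
  have h2 : w.2 + D.bar w.1 * D.mu * w.1 + D.bar w.2 * D.lam - w.2 - D.bar w.2 * D.lam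
      = D.mu - w.2 - D.bar w.2 * D.lam := by rw [hW]
  have hW' : D.bar w.1 * D.mu * w.1 = D.mu - w.2 - D.bar w.2 * D.lam := by
    rw [← h2]; abel
  rw [hSub_one_pair]
  unfold Cc OddFormRingData.hAdd OddFormRingData.hSMul
  ext
  · simp only []; noncomm_ring
  · simp only []
    rw [D.bar_conj2]
    have ht : D.bar (w.1 * a) * D.mu * ((w.1 - 1) * m'.1 + m'.1 + 0)
        = D.bar a * (D.bar w.1 * D.mu * w.1) * m'.1 := by
      rw [D.bar_mul]; noncomm_ring
    rw [ht, hW']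
    simp only [D.bar_add, D.bar_mul, D.bar_sub, D.bar_one]
    noncomm_ring

end BRKsec
/-- The map `(σ, Ω) ↦ ^σΩ` is a left group action of `U_{2n+1}(R, Δ)` on the set of
relative odd form parameters for `I`. -/
theorem statement9 {R : Type*} [Ring R] [Nontrivial R] (D : OddFormRingData R)
    (Δ : Set (R × R)) (hΔ : D.IsFormParam Δ) (n : ℕ)
    (I : Set R) (hI : D.IsInvIdeal I) :
    (∀ Ω : Set (R × R), D.IsRelFormParam Δ I Ω → ∀ σ ∈ D.unitary Δ n,
      D.IsRelFormParam Δ I (D.transportedParam Δ I Ω n σ)) ∧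
    (∀ Ω : Set (R × R), D.IsRelFormParam Δ I Ω →
      D.transportedParam Δ I Ω n 1 = Ω) ∧
    (∀ Ω : Set (R × R), D.IsRelFormParam Δ I Ω → ∀ σ ∈ D.unitary Δ n, ∀ τ ∈ D.unitary Δ n,
      D.transportedParam Δ I Ω n (σ * τ)
        = D.transportedParam Δ I (D.transportedParam Δ I Ω n τ) n σ) := by
  classical
  refine ⟨?_, ?_, ?_⟩
  · -- Part 1: `^σΩ` is a relative odd form parameter
    intro Ω hΩ σ hσ
    have hW : (D.qform fun i => σ.val i (Idx.zero n)).2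
        + D.bar (D.qform fun i => σ.val i (Idx.zero n)).1 * D.mu
          * (D.qform fun i => σ.val i (Idx.zero n)).1
        + D.bar ((D.qform fun i => σ.val i (Idx.zero n)).2) * D.lam = D.mu := us_W hσ
    have hmax : ∀ {x y : R}, (x, y) ∈ Ω →
        x ∈ D.tildeI Δ I ∧ x ∈ JSet Δ ∧ y ∈ I := by
      intro x y h
      have hm := hΩ.le_max h
      exact ⟨hm.2.1, ⟨y, hm.1⟩, hm.2.2⟩
    constructor
    · -- add_mem
      intro p hp q hq
      rw [mem_trans] at hp hq ⊢
      obtain ⟨x1, y1, h1, m, hm, rfl⟩ := hp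
      obtain ⟨x2, y2, h2, m', hm', rfl⟩ := hq
      obtain ⟨hx1t, hx1J, hy1⟩ := hmax h1
      obtain ⟨hx2t, hx2J, hy2⟩ := hmax h2
      refine ⟨x1 + x2, y1 + y2 - D.bar x1 * D.mu * x2, hΩ.add_mem _ h1 _ h2, ?_⟩
      refine ⟨D.hAdd ((0 : R), D.bar (D.bar x2 * (D.qform fun i => σ.val i (Idx.zero n)).2 * x1)
          * D.lam - D.bar x2 * (D.qform fun i => σ.val i (Idx.zero n)).2 * x1)
        (D.hAdd (D.hAdd (D.hAdd
          (D.hNeg (Cc D (D.qform fun i => σ.val i (Idx.zero n)) x2 y2)) m)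
          (Cc D (D.qform fun i => σ.val i (Idx.zero n)) x2 y2)) m'), ?_, ?_⟩
      · exact om_add (om_base' hI (us_K hΔ hI hσ hx1t hx1J hx2t hx2J))
          (om_add (om_conj' hI _ hm) hm')
      · rw [hAdd_reassoc, Cc_add hW, D.hAdd_assoc]
    · -- neg_mem
      intro p hp
      rw [mem_trans] at hp ⊢
      obtain ⟨x, y, hxy, m, hm, rfl⟩ := hp
      obtain ⟨hxt, hxJ, hy⟩ := hmax hxy
      refine ⟨-x, -y - D.bar x * D.mu * x, hΩ.neg_mem _ hxy, ?_⟩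
      refine ⟨D.hAdd ((0 : R), D.bar (D.bar x * (D.qform fun i => σ.val i (Idx.zero n)).2 * x)
          * D.lam - D.bar x * (D.qform fun i => σ.val i (Idx.zero n)).2 * x)
        (D.hAdd (D.hAdd (Cc D (D.qform fun i => σ.val i (Idx.zero n)) x y) (D.hNeg m))
          (D.hNeg (Cc D (D.qform fun i => σ.val i (Idx.zero n)) x y))), ?_, ?_⟩
      · exact om_add (om_base' hI (us_K hΔ hI hσ hxt hxJ hxt hxJ))
          (om_conj hI _ (om_neg hm))
      · rw [hNeg_reassoc, Cc_neg hW, D.hAdd_assoc]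
    · -- smul_mem
      intro p hp r
      rw [mem_trans] at hp ⊢
      obtain ⟨x, y, hxy, m, hm, rfl⟩ := hp
      exact ⟨x * r, D.bar r * y * r, hΩ.smul_mem _ hxy r, D.hSMul m r, om_smul hI hm r,
        Cc_smul _ _ _ _ _⟩
    · -- min_le
      intro m hm
      rw [mem_trans]
      refine ⟨0, 0, hΩ.min_le (om_zero hI), m, hm, ?_⟩
      have hC : Cc D (D.qform fun i => σ.val i (Idx.zero n)) 0 0 = ((0 : R), (0 : R)) := by
        unfold Cc
        ext
        · simp
        · simp [D.bar_zero]
      rw [hC, D.zero_hAdd]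
    · -- le_max
      intro p hp
      rw [mem_trans] at hp
      obtain ⟨x, y, hxy, m, hm, rfl⟩ := hp
      obtain ⟨hxt, hxJ, hy⟩ := hmax hxy
      obtain ⟨hm1, hm2⟩ := om_comps hI hm
      refine ⟨?_, ?_, ?_⟩
      · rw [← canon]
        exact hΔ.add_mem _ (hΔ.add_mem _ (hΔ.smul_mem _ (us_delta hσ) x) _
          (hΩ.le_max hxy).1) _ (om_sub_Delta hΔ hm)
      · show (D.qform fun i => σ.val i (Idx.zero n)).1 * x + m.1 ∈ D.tildeI Δ I
        exact tilde_add hI (us_w1tilde hΔ hI hσ hxt) (I_sub_tilde hI hm1)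
      · show (D.bar x * (D.qform fun i => σ.val i (Idx.zero n)).2 * x + y) + m.2
            - D.bar ((D.qform fun i => σ.val i (Idx.zero n)).1 * x) * D.mu * m.1 ∈ I
        rw [sub_eq_add_neg]
        exact hI.add_mem _ (hI.add_mem _ (hI.add_mem _
          (us_K hΔ hI hσ hxt hxJ hxt hxJ) _ hy) _ hm2) _
          (hI.neg_mem _ (hI.mul_left _ _ hm1))
  · -- Part 2: the identity acts trivially
    intro Ω hΩ
    have hcol : (fun i => (1 : GLn R n).val i (Idx.zero n)) = esingle n (Idx.zero n) 1 := by
      funext i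
      rw [Units.val_one, Matrix.one_apply]
      simp [esingle]
    have hq1 : (D.qform fun i => (1 : GLn R n).val i (Idx.zero n)) = ((1 : R), (0 : R)) := by
      rw [hcol, qform_single, if_pos rfl]
    have hC : ∀ x y : R,
        Cc D (D.qform fun i => (1 : GLn R n).val i (Idx.zero n)) x y = (x, y) := by
      intro x y
      rw [hq1]
      unfold Cc
      ext
      · simp
      · simp
    apply Set.ext
    intro p
    rw [mem_trans]
    constructor
    · rintro ⟨x, y, hxy, m, hm, rfl⟩
      rw [hC]
      exact hΩ.add_mem _ hxy _ (hΩ.min_le hm)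
    · intro hp
      refine ⟨p.1, p.2, by rwa [Prod.mk.eta], (0, 0), om_zero hI, ?_⟩
      rw [hC, D.hAdd_zero]
  · -- Part 3: cocycle property
    intro Ω hΩ σ hσ τ hτ
    have hWσ : (D.qform fun i => σ.val i (Idx.zero n)).2
        + D.bar (D.qform fun i => σ.val i (Idx.zero n)).1 * D.mu
          * (D.qform fun i => σ.val i (Idx.zero n)).1
        + D.bar ((D.qform fun i => σ.val i (Idx.zero n)).2) * D.lam = D.mu := us_W hσ
    apply Set.ext
    intro p
    constructor
    · -- `^{στ}Ω ⊆ ^σ(^τΩ)`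
      intro hp
      rw [mem_trans] at hp
      obtain ⟨x, y, hxy, m, hm, rfl⟩ := hp
      have hxt : x ∈ D.tildeI Δ I := (hΩ.le_max hxy).2.1
      obtain ⟨ω, hω, hcore⟩ := P3core hΔ hI hσ hτ hxt y
      have hinv : Cc D (D.qform fun i => (σ * τ).val i (Idx.zero n)) x y
          = D.hAdd (Cc D (D.qform fun i => σ.val i (Idx.zero n))
              ((D.qform fun i => τ.val i (Idx.zero n)).1 * x)
              (D.bar x * (D.qform fun i => τ.val i (Idx.zero n)).2 * x + y)) (D.hNeg ω) := by
        rw [hcore, hAdd_cancel_right]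
      rw [mem_trans]
      refine ⟨(D.qform fun i => τ.val i (Idx.zero n)).1 * x,
        D.bar x * (D.qform fun i => τ.val i (Idx.zero n)).2 * x + y, ?_, ?_⟩
      · rw [mem_trans]
        exact ⟨x, y, hxy, (0, 0), om_zero hI, (D.hAdd_zero _).symm⟩
      · refine ⟨D.hAdd (D.hNeg ω) m, om_add (om_neg hω) hm, ?_⟩
        rw [hinv, D.hAdd_assoc]
    · -- `^σ(^τΩ) ⊆ ^{στ}Ω`
      intro hp
      rw [mem_trans] at hp
      obtain ⟨x', y', hx'y', m, hm, rfl⟩ := hp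
      rw [mem_trans] at hx'y'
      obtain ⟨x, y, hxy, m', hm', hPeq⟩ := hx'y'
      have hxt : x ∈ D.tildeI Δ I := (hΩ.le_max hxy).2.1
      have hm'1I : m'.1 ∈ I := (om_comps hI hm').1
      have h1 : x' = (D.qform fun i => τ.val i (Idx.zero n)).1 * x + m'.1 :=
        congrArg Prod.fst hPeq
      have h2 : y' = (D.bar x * (D.qform fun i => τ.val i (Idx.zero n)).2 * x + y) + m'.2
          - D.bar ((D.qform fun i => τ.val i (Idx.zero n)).1 * x) * D.mu * m'.1 :=
        congrArg Prod.snd hPeq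
      obtain ⟨ω, hω, hcore⟩ := P3core hΔ hI hσ hτ hxt y
      rw [mem_trans]
      refine ⟨x, y, hxy, ?_⟩
      have hsI : D.bar m'.1 * (D.qform fun i => σ.val i (Idx.zero n)).2
          * ((D.qform fun i => τ.val i (Idx.zero n)).1 * x) ∈ I :=
        hI.mul_right _ _ (hI.mul_right _ _ (hI.bar_mem _ hm'1I))
      refine ⟨D.hAdd (D.hAdd ω
          (D.hAdd (D.hAdd (D.hSMul (D.hSub (D.qform fun i => σ.val i (Idx.zero n))
              ((1 : R), (0 : R))) m'.1) m')
            ((0 : R), D.bar m'.1 * (D.qform fun i => σ.val i (Idx.zero n)).2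
                * ((D.qform fun i => τ.val i (Idx.zero n)).1 * x)
              - D.bar (D.bar m'.1 * (D.qform fun i => σ.val i (Idx.zero n)).2
                * ((D.qform fun i => τ.val i (Idx.zero n)).1 * x)) * D.lam))) m, ?_, ?_⟩
      · exact om_add (om_add hω (om_add (om_add
          (OddFormRingData.OmegaMin.smul _ (us_delta hσ) m'.1 hm'1I) hm') (om_base hsI))) hm
      · rw [h1, h2, BRK hWσ, hcore, D.hAdd_assoc, D.hAdd_assoc, D.hAdd_assoc ω]
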